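/- arXiv:1412.0906 — 5 statements merged into one kernel-verified Lean document; each statement's English description precedes it below -/
import Mathlib

section
/- Let ρ = (ρ_0,…,ρ_t) ∈ ℤ^{t+1} and ρ' = (ρ'_0,…,ρ'_{t'}) ∈ ℤ^{t'+1} each have non-increasing coordinates all at least 1, with ‖ρ‖² ≥ 2g̃ and ‖ρ'‖² ≥ 2g̃, and suppose that ρ realizes (V_i) in dimension t+1 and ρ' realizes (V_i) in dimension t'+1. Then for every integer j ≥ 2, the number of coordinates of ρ equal to j equals the number of coordinates of ρ' equal to j. -/
/-- The standard inner product on `ℤ^{t+1}`. -/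
def dotP {t : ℕ} (x y : Fin (t + 1) → ℤ) : ℤ := ∑ i, x i * y i

/-- A vector of `ℤ^{t+1}` is characteristic if all of its coordinates are odd. -/
def CharVec {t : ℕ} (c : Fin (t + 1) → ℤ) : Prop := ∀ i, Odd (c i)

/-- `ρ ∈ ℤ^{t+1}` realizes the sequence `(V_i)` if, with `n = ‖ρ‖²`, for every integer `k`
with `2|k| ≤ n` the set `{‖c‖² : c characteristic, c·ρ ≡ n + 2k (mod 2n)}` has least
element `8V_{|k|} + t + 1`. -/
def Realizes {t : ℕ} (V : ℕ → ℕ) (ρ : Fin (t + 1) → ℤ) : Prop :=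
  ∀ k : ℤ, 2 * |k| ≤ dotP ρ ρ →
    IsLeast {N : ℤ | ∃ c : Fin (t + 1) → ℤ, CharVec c ∧
        dotP c ρ ≡ dotP ρ ρ + 2 * k [ZMOD 2 * dotP ρ ρ] ∧ N = dotP c c}
      (8 * (V k.natAbs : ℤ) + t + 1)

private def tri (r : ℤ) : ℤ := r * (r - 1) / 2

private lemma two_dvd_pred_mul (r : ℤ) : (2:ℤ) ∣ r * (r - 1) := by
  obtain ⟨x, hx⟩ := Int.even_mul_succ_self (r - 1)
  exact ⟨x, by linarith [hx, (by ring : (r-1) * ((r-1)+1) = r * (r-1))]⟩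

private lemma tri_two (r : ℤ) : 2 * tri r = r * (r - 1) :=
  Int.mul_ediv_cancel' (two_dvd_pred_mul r)

private lemma tri_nonneg {r : ℤ} (h : 1 ≤ r) : 0 ≤ tri r := by
  have := tri_two r; nlinarith


private lemma pg {t : ℕ} (V : ℕ → ℕ) (g : ℕ) (hV2 : ∀ i, V i = 0 ↔ g ≤ i)
    (ρ : Fin (t+1) → ℤ) (hpos : ∀ i, 1 ≤ ρ i) (hreal : Realizes V ρ) :
    (∑ i, tri (ρ i)) = (g : ℤ) := by
  set p := ∑ i, tri (ρ i) with hpdef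
  have hS1 : (1:ℤ) ≤ ∑ i, ρ i := by
    calc (1:ℤ) ≤ ∑ _i : Fin (t+1), (1:ℤ) := by
            simp [Finset.sum_const, Finset.card_univ]
      _ ≤ ∑ i, ρ i := Finset.sum_le_sum fun i _ => hpos i
  have hp0 : 0 ≤ p := Finset.sum_nonneg fun i _ => tri_nonneg (hpos i)
  have hn : dotP ρ ρ = (∑ i, ρ i) + 2 * p := by
    rw [hpdef, Finset.mul_sum, ← Finset.sum_add_distrib]
    refine Finset.sum_congr rfl fun i _ => ?_
    have := tri_two (ρ i); nlinarith
  have hcc1 : ∀ c : Fin (t+1) → ℤ, (∀ i, c i = 1 ∨ c i = -1) → dotP c c = (t:ℤ)+1 := by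
    intro c hc
    have : ∀ i ∈ Finset.univ, c i * c i = (1:ℤ) := by
      intro i _; rcases hc i with h | h <;> rw [h] <;> ring
    rw [dotP, Finset.sum_congr rfl this]
    simp [Finset.sum_const, Finset.card_univ]
  -- A1 : g ≤ p
  have hgp : (g : ℤ) ≤ p := by
    have hkP : 2 * |p| ≤ dotP ρ ρ := by rw [abs_of_nonneg hp0]; linarith
    have hIs := hreal p hkP
    have hmem : ((t:ℤ) + 1) ∈ {N : ℤ | ∃ c : Fin (t + 1) → ℤ, CharVec c ∧
        dotP c ρ ≡ dotP ρ ρ + 2 * p [ZMOD 2 * dotP ρ ρ] ∧ N = dotP c c} := by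
      refine ⟨fun _ => -1, fun i => ⟨-1, by ring⟩, ?_, ?_⟩
      · rw [Int.modEq_iff_dvd]
        have h1 : dotP (fun _ => -1) ρ = -∑ i, ρ i := by
          rw [dotP, ← Finset.sum_neg_distrib]
          exact Finset.sum_congr rfl fun i _ => by ring
        refine ⟨1, ?_⟩
        rw [h1]; linarith
      · exact (hcc1 _ (fun i => Or.inr rfl)).symm
    have hle := hIs.2 hmem
    have hV0 : V p.natAbs = 0 := by
      have h8 : (8:ℤ) * (V p.natAbs : ℤ) ≤ 0 := by linarith
      have hnn : (0:ℤ) ≤ (V p.natAbs : ℤ) := Int.natCast_nonneg _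
      have : (V p.natAbs : ℤ) = 0 := by omega
      exact_mod_cast this
    have := (hV2 p.natAbs).mp hV0
    calc (g:ℤ) ≤ (p.natAbs : ℤ) := by exact_mod_cast this
      _ = p := Int.natAbs_of_nonneg hp0
  -- A3 : p ≤ g
  have hpg : p ≤ (g : ℤ) := by
    by_contra hc
    push_neg at hc
    have hp1 : 1 ≤ p := by omega
    set k := p - 1 with hkdef
    have hk0 : 0 ≤ k := by omega
    have hkP : 2 * |k| ≤ dotP ρ ρ := by rw [abs_of_nonneg hk0]; linarith
    have hVk : V k.natAbs = 0 := by
      refine (hV2 k.natAbs).mpr ?_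
      have : (g : ℤ) ≤ (k.natAbs : ℤ) := by rw [Int.natAbs_of_nonneg hk0]; omega
      exact_mod_cast this
    obtain ⟨c, hchar, hmod, hNc⟩ := (hreal k hkP).1
    rw [hVk] at hNc
    have hNc' : dotP c c = (t:ℤ) + 1 := by push_cast at hNc; linarith
    have hsq1 : ∀ i, 1 ≤ c i * c i := by
      intro i
      obtain ⟨w, hw⟩ := hchar i
      rcases le_or_gt 0 w with h | h <;> nlinarith
    have hall : ∀ i, c i * c i = 1 := by
      by_contra hcon
      push_neg at hcon
      obtain ⟨i0, hi0⟩ := hcon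
      have hlt : ∑ _i : Fin (t+1), (1:ℤ) < ∑ i, c i * c i := by
        refine Finset.sum_lt_sum (fun i _ => hsq1 i) ⟨i0, Finset.mem_univ i0, ?_⟩
        rcases lt_or_gt_of_ne hi0 with h | h
        · linarith [hsq1 i0]
        · exact h
      rw [show (∑ i, c i * c i) = dotP c c from rfl, hNc'] at hlt
      simp [Finset.sum_const, Finset.card_univ] at hlt
    have hpm : ∀ i, c i = 1 ∨ c i = -1 := fun i => mul_self_eq_one_iff.mp (hall i)
    have hub : dotP c ρ ≤ ∑ i, ρ i := by
      refine Finset.sum_le_sum fun i _ => ?_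
      rcases hpm i with h | h <;> rw [h] <;> linarith [hpos i]
    have hlb : -(∑ i, ρ i) ≤ dotP c ρ := by
      rw [← Finset.sum_neg_distrib]
      refine Finset.sum_le_sum fun i _ => ?_
      rcases hpm i with h | h <;> rw [h] <;> linarith [hpos i]
    have hdvd := Int.ModEq.dvd hmod
    have hd1 : 2 ≤ dotP ρ ρ + 2 * k - dotP c ρ := by omega
    have hd2 : dotP ρ ρ + 2 * k - dotP c ρ ≤ 2 * dotP ρ ρ - 2 := by omega
    have := Int.le_of_dvd (by omega) hdvd
    omega
  omega

private lemma regroup {m : ℕ} (v : Fin m → ℤ) (J : Finset ℤ) (hv : ∀ i, v i ∈ J)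
    (f : ℤ → ℤ) :
    (∑ i, f (v i))
      = ∑ j ∈ J, ((Finset.univ.filter (fun i => v i = j)).card : ℤ) * f j := by
  have h1 : ∀ j ∈ J, ((Finset.univ.filter (fun i => v i = j)).card : ℤ) * f j
      = ∑ i : Fin m, if v i = j then f j else 0 := by
    intro j _
    rw [Finset.sum_ite, Finset.sum_const, Finset.sum_const]
    simp [nsmul_eq_mul]
  rw [Finset.sum_congr rfl h1, Finset.sum_comm]
  refine Finset.sum_congr rfl fun i _ => ?_
  have : ∀ j ∈ J, (if v i = j then f j else 0) = if j = v i then f j else 0 := by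
    intro j _; simp [eq_comm]
  rw [Finset.sum_congr rfl this, Finset.sum_ite_eq' J (v i) f, if_pos (hv i)]

private lemma key_ineq (q r x : ℤ) (hq : 2 ≤ q) (hr : 1 ≤ r) :
    2*(x-1)*r ≤ q*(x^2-x) + (2*((r-1)/q)*r - q*(((r-1)/q)^2 + (r-1)/q)) := by
  have hq0 : q ≠ 0 := by omega
  have hdm := Int.mul_ediv_add_emod (r-1) q
  have hm0 : 0 ≤ (r-1) % q := Int.emod_nonneg (r-1) hq0
  have hm1 : (r-1) % q < q := Int.emod_lt_of_pos (r-1) (by omega)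
  set e := (r-1)/q with he
  have h1 : q * e ≤ r - 1 := by omega
  have h2 : r - 1 < q * e + q := by omega
  have he0 : 0 ≤ e := Int.ediv_nonneg (by omega) (by omega)
  obtain ⟨u, rfl⟩ : ∃ u, x = 1 + e + u := ⟨x - 1 - e, by ring⟩
  rcases le_or_gt 0 u with hu0 | hu0
  · nlinarith [mul_nonneg (by omega : (0:ℤ) ≤ q) (by nlinarith : (0:ℤ) ≤ u^2 - u),
      mul_nonneg hu0 (by omega : (0:ℤ) ≤ q*e - r + q)]
  · nlinarith [mul_nonneg (by omega : (0:ℤ) ≤ q) (by nlinarith : (0:ℤ) ≤ u^2 + u),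
      mul_nonneg (by omega : (0:ℤ) ≤ -u) (by omega : (0:ℤ) ≤ r - q*e - 1)]

set_option maxHeartbeats 2000000 in
private lemma main_contra {t t' : ℕ} (V : ℕ → ℕ) (g : ℕ) (hV2 : ∀ i, V i = 0 ↔ g ≤ i)
    (ρ : Fin (t+1) → ℤ) (ρ' : Fin (t'+1) → ℤ)
    (hpos : ∀ i, 1 ≤ ρ i) (hreal : Realizes V ρ)
    (hpos' : ∀ i, 1 ≤ ρ' i) (hreal' : Realizes V ρ')
    (j : ℤ) (hj3 : 3 ≤ j)
    (hhigh : ∀ u : ℤ, j < u →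
      (Finset.univ.filter (fun i : Fin (t+1) => ρ i = u)).card
        = (Finset.univ.filter (fun i : Fin (t'+1) => ρ' i = u)).card)
    (hlt : (Finset.univ.filter (fun i : Fin (t'+1) => ρ' i = j)).card
        < (Finset.univ.filter (fun i : Fin (t+1) => ρ i = j)).card) :
    False := by
  set q := j - 1 with hqdef
  have hq : 2 ≤ q := by omega
  have hq0 : q ≠ 0 := by omega
  set e : ℤ → ℤ := fun r => (r-1)/q with hedef
  set c2 : ℤ → ℤ := fun r => 2*((r-1)/q)*r - q*(((r-1)/q)^2 + (r-1)/q) with hc2def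
  -- basic per-coordinate facts
  have hefacts : ∀ r : ℤ, 1 ≤ r → 0 ≤ e r ∧ q * e r ≤ r - 1 ∧ r - 1 < q * e r + q := by
    intro r hr
    have hdm := Int.mul_ediv_add_emod (r-1) q
    have hm0 : 0 ≤ (r-1) % q := Int.emod_nonneg (r-1) hq0
    have hm1 : (r-1) % q < q := Int.emod_lt_of_pos (r-1) (by omega)
    refine ⟨Int.ediv_nonneg (by omega) (by omega), by simp only [hedef]; omega,
      by simp only [hedef]; omega⟩
  -- p, S, n for both vectors
  set p := ∑ i, tri (ρ i) with hpdef
  set p' := ∑ i, tri (ρ' i) with hp'def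
  have hpg : p = (g:ℤ) := by rw [hpdef]; exact pg V g hV2 ρ hpos hreal
  have hp'g : p' = (g:ℤ) := by rw [hp'def]; exact pg V g hV2 ρ' hpos' hreal'
  have hpp' : p = p' := by omega
  set S := ∑ i, ρ i with hSdef
  set S' := ∑ i, ρ' i with hS'def
  have hS1 : (1:ℤ) ≤ S := by
    calc (1:ℤ) ≤ ∑ _i : Fin (t+1), (1:ℤ) := by
          simp [Finset.sum_const, Finset.card_univ]
      _ ≤ S := Finset.sum_le_sum fun i _ => hpos i
  have hS1' : (1:ℤ) ≤ S' := by
    calc (1:ℤ) ≤ ∑ _i : Fin (t'+1), (1:ℤ) := by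
          simp [Finset.sum_const, Finset.card_univ]
      _ ≤ S' := Finset.sum_le_sum fun i _ => hpos' i
  have hn : dotP ρ ρ = S + 2 * p := by
    rw [hpdef, hSdef, Finset.mul_sum, ← Finset.sum_add_distrib]
    refine Finset.sum_congr rfl fun i _ => ?_
    have := tri_two (ρ i); nlinarith
  have hn' : dotP ρ' ρ' = S' + 2 * p' := by
    rw [hp'def, hS'def, Finset.mul_sum, ← Finset.sum_add_distrib]
    refine Finset.sum_congr rfl fun i _ => ?_
    have := tri_two (ρ' i); nlinarith
  -- the quantities h*, s2, Γ, Γ'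
  set hst := ∑ i, e (ρ i) * ρ i with hstdef
  set s2 := ∑ i, ((e (ρ i))^2 + e (ρ i)) with hs2def
  set G := ∑ i, c2 (ρ i) with hGdef
  set G' := ∑ i, c2 (ρ' i) with hG'def
  have hF1 : 2 * hst = q * s2 + G := by
    rw [hstdef, hs2def, hGdef, Finset.mul_sum, Finset.mul_sum, ← Finset.sum_add_distrib]
    refine Finset.sum_congr rfl fun i _ => ?_
    simp only [hc2def, hedef]; ring
  have hh0 : 0 ≤ hst := Finset.sum_nonneg fun i _ =>
    mul_nonneg (hefacts (ρ i) (hpos i)).1 (by linarith [hpos i])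
  have hhp : hst ≤ p := by
    refine Finset.sum_le_sum fun i _ => ?_
    obtain ⟨h1, h2, h3⟩ := hefacts (ρ i) (hpos i)
    have htt := tri_two (ρ i)
    have h4 : 2 * e (ρ i) ≤ ρ i - 1 := by nlinarith
    nlinarith [mul_le_mul_of_nonneg_right h4 (by linarith [hpos i] : (0:ℤ) ≤ ρ i)]
  -- counting: G' + 2 ≤ G
  have hGG : G' + 2 ≤ G := by
    set M := S + S' with hMdef
    set J := Finset.Icc (1:ℤ) M with hJdef
    have hmemJ : ∀ i, ρ i ∈ J := by
      intro i
      rw [hJdef, Finset.mem_Icc]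
      refine ⟨hpos i, ?_⟩
      have : ρ i ≤ S := Finset.single_le_sum (fun i _ => by linarith [hpos i]) (Finset.mem_univ i)
      linarith
    have hmemJ' : ∀ i, ρ' i ∈ J := by
      intro i
      rw [hJdef, Finset.mem_Icc]
      refine ⟨hpos' i, ?_⟩
      have : ρ' i ≤ S' := Finset.single_le_sum (fun i _ => by linarith [hpos' i]) (Finset.mem_univ i)
      linarith
    have hc2low : ∀ u : ℤ, 1 ≤ u → u < j → c2 u = 0 := by
      intro u h1 h2
      have : (u - 1) / q = 0 := Int.ediv_eq_zero_of_lt (by omega) (by omega)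
      simp only [hc2def, this]; ring
    have hc2j : c2 j = 2 := by
      have : (j - 1) / q = 1 := by rw [hqdef]; exact Int.ediv_self (by omega)
      simp only [hc2def, this]; rw [hqdef]; ring
    have hjJ : j ∈ J := by
      rw [hJdef, Finset.mem_Icc]
      refine ⟨by omega, ?_⟩
      have hne : (Finset.univ.filter (fun i : Fin (t+1) => ρ i = j)).Nonempty := by
        rw [← Finset.card_pos]; omega
      obtain ⟨i0, hi0⟩ := hne
      have : ρ i0 = j := (Finset.mem_filter.mp hi0).2
      have hle : ρ i0 ≤ S := Finset.single_le_sum (fun i _ => by linarith [hpos i]) (Finset.mem_univ i0)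
      omega
    have hreg := regroup ρ J hmemJ c2
    have hreg' := regroup ρ' J hmemJ' c2
    have hdiff : G - G' = ∑ u ∈ J,
        (((Finset.univ.filter (fun i : Fin (t+1) => ρ i = u)).card : ℤ)
          - ((Finset.univ.filter (fun i : Fin (t'+1) => ρ' i = u)).card : ℤ)) * c2 u := by
      rw [hGdef, hG'def, hreg, hreg', ← Finset.sum_sub_distrib]
      exact Finset.sum_congr rfl fun u _ => by ring
    have hsingle : ∑ u ∈ J,
        (((Finset.univ.filter (fun i : Fin (t+1) => ρ i = u)).card : ℤ)
          - ((Finset.univ.filter (fun i : Fin (t'+1) => ρ' i = u)).card : ℤ)) * c2 u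
        = (((Finset.univ.filter (fun i : Fin (t+1) => ρ i = j)).card : ℤ)
          - ((Finset.univ.filter (fun i : Fin (t'+1) => ρ' i = j)).card : ℤ)) * c2 j := by
      refine Finset.sum_eq_single_of_mem j hjJ fun u hu hne => ?_
      rcases lt_or_gt_of_ne hne with h | h
      · have h1u : 1 ≤ u := (Finset.mem_Icc.mp hu).1
        rw [hc2low u h1u h]; ring
      · rw [hhigh u h]; ring
    rw [hsingle, hc2j] at hdiff
    have : 1 ≤ ((Finset.univ.filter (fun i : Fin (t+1) => ρ i = j)).card : ℤ)
          - ((Finset.univ.filter (fun i : Fin (t'+1) => ρ' i = j)).card : ℤ) := by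
      omega
    linarith
  -- the probe index k
  set k := p - hst with hkdef
  have hk0 : 0 ≤ k := by omega
  have hkn : 2 * |k| ≤ dotP ρ ρ := by rw [abs_of_nonneg hk0]; linarith
  have hkn' : 2 * |k| ≤ dotP ρ' ρ' := by rw [abs_of_nonneg hk0]; linarith
  -- upper bound from ρ side
  have h2V : 2 * (V k.natAbs : ℤ) ≤ s2 := by
    have hIs := hreal k hkn
    have hmem : ((t:ℤ) + 1 + 4 * s2) ∈ {N : ℤ | ∃ c : Fin (t + 1) → ℤ, CharVec c ∧
        dotP c ρ ≡ dotP ρ ρ + 2 * k [ZMOD 2 * dotP ρ ρ] ∧ N = dotP c c} := by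
      refine ⟨fun i => -(1 + 2 * e (ρ i)), fun i => ⟨-(1 + e (ρ i)), by ring⟩, ?_, ?_⟩
      · rw [Int.modEq_iff_dvd]
        have hdc : dotP (fun i => -(1 + 2 * e (ρ i))) ρ = -S + (-2) * hst := by
          rw [dotP, hSdef, hstdef, Finset.mul_sum, ← Finset.sum_neg_distrib,
            ← Finset.sum_add_distrib]
          exact Finset.sum_congr rfl fun i _ => by ring
        refine ⟨1, ?_⟩
        rw [hdc, hkdef, hn]; ring
      · have : dotP (fun i => -(1 + 2 * e (ρ i))) (fun i => -(1 + 2 * e (ρ i)))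
            = (∑ _i : Fin (t+1), (1:ℤ)) + 4 * s2 := by
          rw [dotP, hs2def, Finset.mul_sum, ← Finset.sum_add_distrib]
          exact Finset.sum_congr rfl fun i _ => by ring
        rw [this]
        simp [Finset.sum_const, Finset.card_univ]
    have hle := hIs.2 hmem
    linarith
  -- lower bound from ρ' side
  obtain ⟨c', hchar', hmod', hN'⟩ := (hreal' k hkn').1
  choose w hw using hchar'
  set x : Fin (t'+1) → ℤ := fun i => -(w i) with hxdef
  have hcx : ∀ i, c' i = 1 - 2 * x i := by
    intro i; rw [hw i, hxdef]; ring
  set B := ∑ i, ((x i)^2 - x i) with hBdef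
  set X := ∑ i, x i * ρ' i with hXdef
  have hBV : B = 2 * (V k.natAbs : ℤ) := by
    have hdcc : dotP c' c' = (∑ _i : Fin (t'+1), (1:ℤ)) + 4 * B := by
      rw [dotP, hBdef, Finset.mul_sum, ← Finset.sum_add_distrib]
      refine Finset.sum_congr rfl fun i _ => ?_
      rw [hcx i]; ring
    rw [hdcc] at hN'
    simp [Finset.sum_const, Finset.card_univ] at hN'
    push_cast at hN'
    linarith
  have hdc' : dotP c' ρ' = S' - 2 * X := by
    rw [dotP, hS'def, hXdef, Finset.mul_sum, ← Finset.sum_sub_distrib]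
    refine Finset.sum_congr rfl fun i _ => ?_
    rw [hcx i]; ring
  obtain ⟨l, hl⟩ := Int.ModEq.dvd hmod'
  rw [hdc'] at hl
  -- hl : dotP ρ' ρ' + 2 * k - (S' - 2 * X) = 2 * dotP ρ' ρ' * l
  have hX : X = S' + hst + dotP ρ' ρ' * (l - 1) := by
    have h2X : 2*X = 2*(S' + hst + dotP ρ' ρ' * (l - 1)) := by
      linear_combination hl + hn' - 2*hkdef - 2*hpp'
    linarith
  -- the two summed inequalities
  have ineq1 : 2*X - 2*S' ≤ q * B + G' :=
    calc 2*X - 2*S' = ∑ i, 2*(x i - 1)*ρ' i := by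
          rw [hXdef, hS'def, Finset.mul_sum, Finset.mul_sum, ← Finset.sum_sub_distrib]
          exact Finset.sum_congr rfl fun i _ => by ring
      _ ≤ ∑ i, (q*((x i)^2 - x i)
            + (2*((ρ' i - 1)/q)*(ρ' i) - q*(((ρ' i - 1)/q)^2 + (ρ' i - 1)/q))) :=
          Finset.sum_le_sum (fun i _ => key_ineq q (ρ' i) (x i) hq (hpos' i))
      _ = q * B + G' := by
          rw [hBdef, hG'def, Finset.mul_sum, ← Finset.sum_add_distrib]
  have ineq2 : -(2*X) ≤ q * B + G' :=
    calc -(2*X) = ∑ i, 2*((1 - x i) - 1)*ρ' i := by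
          rw [hXdef, Finset.mul_sum, ← Finset.sum_neg_distrib]
          exact Finset.sum_congr rfl fun i _ => by ring
      _ ≤ ∑ i, (q*((1 - x i)^2 - (1 - x i))
            + (2*((ρ' i - 1)/q)*(ρ' i) - q*(((ρ' i - 1)/q)^2 + (ρ' i - 1)/q))) :=
          Finset.sum_le_sum (fun i _ => key_ineq q (ρ' i) (1 - x i) hq (hpos' i))
      _ = q * B + G' := by
          rw [hBdef, hG'def, Finset.mul_sum, ← Finset.sum_add_distrib]
          exact Finset.sum_congr rfl fun i _ => by ring
  -- case analysis on l
  have hnn' : 0 ≤ dotP ρ' ρ' := by linarith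
  have hmain : q * s2 + 2 ≤ q * B := by
    rcases le_or_gt 1 l with hl1 | hl0
    · have : 0 ≤ dotP ρ' ρ' * (l - 1) := mul_nonneg hnn' (by omega)
      linarith
    · have h1 : dotP ρ' ρ' * 1 ≤ dotP ρ' ρ' * (1 - l) :=
        mul_le_mul_of_nonneg_left (by omega) hnn'
      have h2 : -(2*X) = -2*S' - 2*hst + 2*(dotP ρ' ρ' * (1 - l)) := by
        rw [hX]; ring
      linarith
  -- final contradiction
  have hBle : B ≤ s2 := by linarith
  nlinarith [mul_le_mul_of_nonneg_left hBle (by linarith : (0:ℤ) ≤ q)]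


set_option maxHeartbeats 1000000 in
/-- If `ρ ∈ ℤ^{t+1}` and `ρ' ∈ ℤ^{t'+1}` each have non-increasing coordinates all at
least `1`, norms at least `2g̃`, and both realize `(V_i)` (in their respective
dimensions), then for every integer `j ≥ 2` the number of coordinates of `ρ` equal to
`j` equals the number of coordinates of `ρ'` equal to `j`. -/
theorem stmt7 (V : ℕ → ℕ) (g : ℕ)
    (hV1 : ∀ i, V (i + 1) ≤ V i)
    (hV2 : ∀ i, V i = 0 ↔ g ≤ i)
    (hV3 : ∀ i, V i ≤ V (i + 1) + 1)
    (t t' : ℕ) (ρ : Fin (t + 1) → ℤ) (ρ' : Fin (t' + 1) → ℤ)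
    (hmono : ∀ i j : Fin (t + 1), i ≤ j → ρ j ≤ ρ i)
    (hpos : ∀ i, 1 ≤ ρ i)
    (hg : 2 * (g : ℤ) ≤ dotP ρ ρ)
    (hreal : Realizes V ρ)
    (hmono' : ∀ i j : Fin (t' + 1), i ≤ j → ρ' j ≤ ρ' i)
    (hpos' : ∀ i, 1 ≤ ρ' i)
    (hg' : 2 * (g : ℤ) ≤ dotP ρ' ρ')
    (hreal' : Realizes V ρ') :
    ∀ j : ℤ, 2 ≤ j →
      (Finset.univ.filter (fun i : Fin (t + 1) => ρ i = j)).card =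
      (Finset.univ.filter (fun i : Fin (t' + 1) => ρ' i = j)).card := by
  intro j0 hj0
  by_contra hne
  set S := ∑ i, ρ i with hSdef
  set S' := ∑ i, ρ' i with hS'def
  have hS1 : (1:ℤ) ≤ S := by
    calc (1:ℤ) ≤ ∑ _i : Fin (t+1), (1:ℤ) := by
          simp [Finset.sum_const, Finset.card_univ]
      _ ≤ S := Finset.sum_le_sum fun i _ => hpos i
  have hS1' : (1:ℤ) ≤ S' := by
    calc (1:ℤ) ≤ ∑ _i : Fin (t'+1), (1:ℤ) := by
          simp [Finset.sum_const, Finset.card_univ]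
      _ ≤ S' := Finset.sum_le_sum fun i _ => hpos' i
  set M := S + S' with hMdef
  have hbd : ∀ i, ρ i ≤ M := by
    intro i
    have : ρ i ≤ S := Finset.single_le_sum (fun i _ => by linarith [hpos i]) (Finset.mem_univ i)
    linarith
  have hbd' : ∀ i, ρ' i ≤ M := by
    intro i
    have : ρ' i ≤ S' := Finset.single_le_sum (fun i _ => by linarith [hpos' i]) (Finset.mem_univ i)
    linarith
  -- any value with differing counts lies in [2, M]
  have hinT : ∀ u : ℤ, 2 ≤ u →
      (Finset.univ.filter (fun i : Fin (t + 1) => ρ i = u)).card ≠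
      (Finset.univ.filter (fun i : Fin (t' + 1) => ρ' i = u)).card → u ≤ M := by
    intro u h2 hneu
    rcases Nat.eq_zero_or_pos (Finset.univ.filter (fun i : Fin (t + 1) => ρ i = u)).card
      with h0 | hposc
    · have : 0 < (Finset.univ.filter (fun i : Fin (t' + 1) => ρ' i = u)).card := by omega
      obtain ⟨i0, hi0⟩ := Finset.card_pos.mp this
      have := (Finset.mem_filter.mp hi0).2
      have := hbd' i0
      omega
    · obtain ⟨i0, hi0⟩ := Finset.card_pos.mp hposc
      have := (Finset.mem_filter.mp hi0).2
      have := hbd i0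
      omega
  set T := (Finset.Icc 2 M).filter (fun u : ℤ =>
    (Finset.univ.filter (fun i : Fin (t + 1) => ρ i = u)).card ≠
    (Finset.univ.filter (fun i : Fin (t' + 1) => ρ' i = u)).card) with hTdef
  have hjT : j0 ∈ T := by
    rw [hTdef, Finset.mem_filter, Finset.mem_Icc]
    exact ⟨⟨hj0, hinT j0 hj0 hne⟩, hne⟩
  have hTne : T.Nonempty := ⟨j0, hjT⟩
  set js := T.max' hTne with hjsdef
  have hjsT : js ∈ T := T.max'_mem hTne
  have hjs2 : 2 ≤ js := (Finset.mem_Icc.mp (Finset.mem_filter.mp hjsT).1).1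
  have hjsM : js ≤ M := (Finset.mem_Icc.mp (Finset.mem_filter.mp hjsT).1).2
  have hdiff : (Finset.univ.filter (fun i : Fin (t + 1) => ρ i = js)).card ≠
      (Finset.univ.filter (fun i : Fin (t' + 1) => ρ' i = js)).card :=
    (Finset.mem_filter.mp hjsT).2
  have hhigh : ∀ u : ℤ, js < u →
      (Finset.univ.filter (fun i : Fin (t + 1) => ρ i = u)).card =
      (Finset.univ.filter (fun i : Fin (t' + 1) => ρ' i = u)).card := by
    intro u hu
    by_contra hz
    have h2u : 2 ≤ u := by omega
    have huT : u ∈ T := by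
      rw [hTdef, Finset.mem_filter, Finset.mem_Icc]
      exact ⟨⟨h2u, hinT u h2u hz⟩, hz⟩
    exact absurd (T.le_max' u huT) (not_le.mpr hu)
  -- js ≥ 3
  have hj3 : 3 ≤ js := by
    by_contra hcon
    have hj2 : js = 2 := by omega
    -- regroup argument with f r = r^2 - r
    have hpg : (∑ i, tri (ρ i)) = (g:ℤ) := pg V g hV2 ρ hpos hreal
    have hp'g : (∑ i, tri (ρ' i)) = (g:ℤ) := pg V g hV2 ρ' hpos' hreal'
    set J := Finset.Icc (1:ℤ) M with hJdef
    have hmemJ : ∀ i, ρ i ∈ J := fun i => Finset.mem_Icc.mpr ⟨hpos i, hbd i⟩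
    have hmemJ' : ∀ i, ρ' i ∈ J := fun i => Finset.mem_Icc.mpr ⟨hpos' i, hbd' i⟩
    have hreg := regroup ρ J hmemJ (fun r => r*r - r)
    have hreg' := regroup ρ' J hmemJ' (fun r => r*r - r)
    have hsum2 : (∑ i, (ρ i * ρ i - ρ i)) = 2 * ∑ i, tri (ρ i) := by
      rw [Finset.mul_sum]
      exact Finset.sum_congr rfl fun i _ => by
        have := tri_two (ρ i); nlinarith
    have hsum2' : (∑ i, (ρ' i * ρ' i - ρ' i)) = 2 * ∑ i, tri (ρ' i) := by
      rw [Finset.mul_sum]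
      exact Finset.sum_congr rfl fun i _ => by
        have := tri_two (ρ' i); nlinarith
    have hzero : (0:ℤ) = ∑ u ∈ J,
        ((((Finset.univ.filter (fun i : Fin (t+1) => ρ i = u)).card : ℤ)
          - ((Finset.univ.filter (fun i : Fin (t'+1) => ρ' i = u)).card : ℤ)) * (u*u - u)) := by
      have h1 : (∑ i, (ρ i * ρ i - ρ i)) - (∑ i, (ρ' i * ρ' i - ρ' i)) = 0 := by
        rw [hsum2, hsum2', hpg, hp'g]; ring
      rw [hreg, hreg'] at h1
      rw [← Finset.sum_sub_distrib] at h1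
      rw [← h1]
      exact Finset.sum_congr rfl fun u _ => by ring
    have hsingle : ∑ u ∈ J,
        ((((Finset.univ.filter (fun i : Fin (t+1) => ρ i = u)).card : ℤ)
          - ((Finset.univ.filter (fun i : Fin (t'+1) => ρ' i = u)).card : ℤ)) * (u*u - u))
        = (((Finset.univ.filter (fun i : Fin (t+1) => ρ i = (2:ℤ))).card : ℤ)
          - ((Finset.univ.filter (fun i : Fin (t'+1) => ρ' i = (2:ℤ))).card : ℤ)) * 2 := by
      have h2J : (2:ℤ) ∈ J := Finset.mem_Icc.mpr ⟨by omega, by omega⟩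
      rw [Finset.sum_eq_single_of_mem (2:ℤ) h2J ?_]
      · ring
      · intro u hu hneu
        rcases lt_or_gt_of_ne hneu with h | h
        · have h1u : 1 ≤ u := (Finset.mem_Icc.mp hu).1
          have : u = 1 := by omega
          rw [this]; ring
        · rw [hhigh u (by omega)]; ring
    rw [hsingle] at hzero
    have : ((Finset.univ.filter (fun i : Fin (t+1) => ρ i = (2:ℤ))).card : ℤ)
        = ((Finset.univ.filter (fun i : Fin (t'+1) => ρ' i = (2:ℤ))).card : ℤ) := by omega
    rw [hj2] at hdiff
    exact hdiff (by exact_mod_cast this)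
  -- conclude via main_contra (two symmetric cases)
  rcases lt_or_gt_of_ne hdiff with h | h
  · exact main_contra V g hV2 ρ' ρ hpos' hreal' hpos hreal js hj3
      (fun u hu => (hhigh u hu).symm) h
  · exact main_contra V g hV2 ρ ρ' hpos hreal hpos' hreal' js hj3 hhigh h
end

section
/- Let (M, B) be a lattice of rank r ≥ 1 with an obtuse superbase v_0, v_1, …, v_r. Then: (1) the simple graph on the index set {0, 1, …, r} in which i and j are adjacent if and only if i ≠ j and v_i·v_j < 0 is connected; (2) the ℤ-linear map φ : ℤ^{r+1} → M defined by φ(x) = Σ_{i=0}^r x_i v_i is surjective, its kernel is exactly {(c, c, …, c) : c ∈ ℤ}, and for all x, y ∈ ℤ^{r+1} one has B(φ(x), φ(y)) = Σ_{0 ≤ i < j ≤ r} (−v_i·v_j)(x_i − x_j)(y_i − y_j). -/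
/-- Let `(M, B)` be a lattice (finitely generated free ℤ-module with a symmetric
positive-definite bilinear form) of rank `r ≥ 1` with an obtuse superbase
`v_0, …, v_r`. Then: (1) the simple graph on `{0,…,r}` in which `i ~ j` iff `i ≠ j`
and `v_i·v_j < 0` is connected; (2) the ℤ-linear map `φ(x) = Σ x_i v_i` is surjective,
its kernel consists exactly of the constant vectors, and
`B(φ(x), φ(y)) = Σ_{i<j} (−v_i·v_j)(x_i − x_j)(y_i − y_j)`. -/
theorem stmt9 (M : Type*) [AddCommGroup M] [Module ℤ M]
    [Module.Free ℤ M] [Module.Finite ℤ M]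
    (B : M →ₗ[ℤ] M →ₗ[ℤ] ℤ)
    (hsymm : ∀ x y : M, B x y = B y x)
    (hpos : ∀ x : M, x ≠ 0 → 0 < B x x)
    (r : ℕ) (hr : 1 ≤ r) (hrank : Module.finrank ℤ M = r)
    (v : Fin (r + 1) → M)
    (hspan : Submodule.span ℤ (Set.range v) = ⊤)
    (hsum : ∑ i, v i = 0)
    (hobtuse : ∀ i j, i ≠ j → B (v i) (v j) ≤ 0) :
    (SimpleGraph.fromRel (fun i j : Fin (r + 1) => B (v i) (v j) < 0)).Connected ∧
    Function.Surjective (fun x : Fin (r + 1) → ℤ => ∑ i, x i • v i) ∧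
    (∀ x : Fin (r + 1) → ℤ, (∑ i, x i • v i) = 0 ↔ ∃ c : ℤ, ∀ i, x i = c) ∧
    (∀ x y : Fin (r + 1) → ℤ,
      B (∑ i, x i • v i) (∑ i, y i • v i) =
        ∑ i : Fin (r + 1), ∑ j ∈ Finset.univ.filter (fun j : Fin (r + 1) => i < j),
          (-(B (v i) (v j))) * (x i - x j) * (y i - y j)) := by
  classical
  set Φ : (Fin (r + 1) → ℤ) →ₗ[ℤ] M := Fintype.linearCombination ℤ v with hΦdef
  have hΦ : ∀ x : Fin (r + 1) → ℤ, Φ x = ∑ i, x i • v i := by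
    intro x
    rw [hΦdef, Fintype.linearCombination_apply]
    refine Finset.sum_congr rfl fun i _ => ?_
    rw [← Int.cast_smul_eq_zsmul ℤ, Int.cast_id]
  simp only [← hΦ]
  -- basic facts
  have hv0 : v 0 = -∑ i : Fin r, v i.succ := by
    have h := hsum
    rw [Fin.sum_univ_succ] at h
    exact eq_neg_of_add_eq_zero_left h
  set ψ : (Fin r → ℤ) →ₗ[ℤ] M := Fintype.linearCombination ℤ (fun i : Fin r => v i.succ)
    with hψdef
  have key : ∀ x : Fin (r + 1) → ℤ, ψ (fun i => x i.succ - x 0) = Φ x := by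
    intro x
    rw [hψdef, hΦdef, Fintype.linearCombination_apply, Fintype.linearCombination_apply,
      Fin.sum_univ_succ, hv0]
    simp only [sub_smul, Finset.sum_sub_distrib, smul_neg, ← Finset.smul_sum]
    abel
  -- surjectivity
  have hsurj : Function.Surjective Φ := by
    intro m
    have hm : m ∈ Submodule.span ℤ (Set.range v) := hspan ▸ Submodule.mem_top
    obtain ⟨c, hc⟩ := (Submodule.mem_span_range_iff_exists_fun ℤ).1 hm
    exact ⟨c, by rw [hΦdef, Fintype.linearCombination_apply]; exact hc⟩
  have hψsurj : Function.Surjective ψ := by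
    intro m
    obtain ⟨c, hc⟩ := hsurj m
    exact ⟨fun i => c i.succ - c 0, (key c).trans hc⟩
  have hψinj : Function.Injective ψ := by
    have hcard : Fintype.card (Module.Free.ChooseBasisIndex ℤ M) = r := by
      rw [← Module.finrank_eq_card_chooseBasisIndex, hrank]
    let b' : Module.Basis (Fin r) ℤ M :=
      (Module.Free.chooseBasis ℤ M).reindex (Fintype.equivFinOfCardEq hcard)
    exact OrzechProperty.injective_of_surjective_of_injective
      b'.equivFun.symm.toLinearMap ψ b'.equivFun.symm.injective hψsurj
  -- kernel
  have hker : ∀ x : Fin (r + 1) → ℤ, Φ x = 0 ↔ ∃ c : ℤ, ∀ i, x i = c := by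
    intro x
    constructor
    · intro hx
      refine ⟨x 0, ?_⟩
      have h1 : ψ (fun i => x i.succ - x 0) = ψ 0 := by
        rw [map_zero]
        exact (key x).trans hx
      have h2 := hψinj h1
      intro i
      refine Fin.cases rfl (fun j => ?_) i
      have := congrFun h2 j
      simpa [sub_eq_zero] using this
    · rintro ⟨c, hc⟩
      have : x = fun _ => c := funext hc
      subst this
      rw [hΦdef, Fintype.linearCombination_apply, ← Finset.smul_sum, hsum]
      simp
  -- row sums of the Gram matrix vanish
  have hrow : ∀ i, ∑ j, B (v i) (v j) = 0 := by
    intro i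
    rw [← map_sum, hsum, map_zero]
  have hcol : ∀ j, ∑ i, B (v i) (v j) = 0 := by
    intro j
    calc ∑ i, B (v i) (v j) = ∑ i, B (v j) (v i) :=
          Finset.sum_congr rfl fun i _ => hsymm _ _
      _ = 0 := hrow j
  -- the quadratic form identity
  have hquad : ∀ x y : Fin (r + 1) → ℤ,
      B (Φ x) (Φ y) =
        ∑ i : Fin (r + 1), ∑ j ∈ Finset.univ.filter (fun j : Fin (r + 1) => i < j),
          (-(B (v i) (v j))) * (x i - x j) * (y i - y j) := by
    intro x y
    have hB1 : ∀ m : M, B (Φ x) m = ∑ i, x i * B (v i) m := by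
      intro m
      rw [hΦdef, Fintype.linearCombination_apply, map_sum, LinearMap.coe_sum,
        Finset.sum_apply]
      exact Finset.sum_congr rfl fun i _ => by
        rw [LinearMap.map_smul, LinearMap.smul_apply, smul_eq_mul]
    have hLHS : B (Φ x) (Φ y) = ∑ i, ∑ j, B (v i) (v j) * (x i * y j) := by
      rw [hB1]
      refine Finset.sum_congr rfl fun i _ => ?_
      rw [hΦdef, Fintype.linearCombination_apply, map_sum, Finset.mul_sum]
      refine Finset.sum_congr rfl fun j _ => ?_
      rw [LinearMap.map_smul, smul_eq_mul]
      ring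
    set S := ∑ i, ∑ j, B (v i) (v j) * (x i * y j) with hS
    set g : Fin (r + 1) → Fin (r + 1) → ℤ :=
      fun i j => (-(B (v i) (v j))) * (x i - x j) * (y i - y j) with hg
    set P := ∑ i : Fin (r + 1), ∑ j ∈ Finset.univ.filter (fun j : Fin (r + 1) => i < j), g i j
      with hP
    have hgsymm : ∀ i j, g j i = g i j := by
      intro i j
      simp only [hg]
      rw [hsymm]
      ring
    have hsplit : ∑ i, ∑ j, g i j = 2 * P := by
      have h2 : ∀ i : Fin (r + 1),
          Finset.univ.filter (fun j => ¬ i < j)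
            = insert i (Finset.univ.filter (fun j : Fin (r + 1) => j < i)) := by
        intro i
        ext j
        simp [not_lt, le_iff_lt_or_eq, or_comm, eq_comm]
      have hdiag : ∀ i : Fin (r + 1), g i i = 0 := by
        intro i; simp [hg]
      have h3 : ∑ i, ∑ j ∈ Finset.univ.filter (fun j : Fin (r + 1) => j < i), g i j = P := by
        have hc1 : ∀ i : Fin (r + 1),
            ∑ j ∈ Finset.univ.filter (fun j : Fin (r + 1) => j < i), g i j
            = ∑ j, if j < i then g i j else 0 := fun i => by rw [Finset.sum_filter]
        have hc2 : ∀ i : Fin (r + 1),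
            ∑ j ∈ Finset.univ.filter (fun j : Fin (r + 1) => i < j), g i j
            = ∑ j, if i < j then g i j else 0 := fun i => by rw [Finset.sum_filter]
        simp only [hc1]
        rw [Finset.sum_comm, hP]
        simp only [hc2]
        refine Finset.sum_congr rfl fun i _ => Finset.sum_congr rfl fun j _ => ?_
        by_cases h : i < j
        · simp [h, hgsymm]
        · simp [h]
      calc ∑ i, ∑ j, g i j
          = ∑ i, ((∑ j ∈ Finset.univ.filter (fun j => i < j), g i j)
            + ∑ j ∈ Finset.univ.filter (fun j => ¬ i < j), g i j) :=
            Finset.sum_congr rfl fun i _ =>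
              (Finset.sum_filter_add_sum_filter_not _ _ _).symm
        _ = P + ∑ i, ∑ j ∈ Finset.univ.filter (fun j => ¬ i < j), g i j := by
            rw [Finset.sum_add_distrib, hP]
        _ = P + ∑ i, (g i i + ∑ j ∈ Finset.univ.filter (fun j : Fin (r + 1) => j < i), g i j) := by
            congr 1
            refine Finset.sum_congr rfl fun i _ => ?_
            rw [h2 i, Finset.sum_insert (by simp)]
        _ = P + P := by
            simp only [hdiag, zero_add]
            rw [h3]
        _ = 2 * P := by ring
    have hfull : ∑ i, ∑ j, g i j = 2 * S := by
      have e1 : ∑ i : Fin (r + 1), ∑ j, B (v i) (v j) * (x i * y i) = 0 := by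
        refine Finset.sum_eq_zero fun i _ => ?_
        rw [← Finset.sum_mul, hrow i, zero_mul]
      have e2 : ∑ i : Fin (r + 1), ∑ j, B (v i) (v j) * (x j * y j) = 0 := by
        rw [Finset.sum_comm]
        refine Finset.sum_eq_zero fun j _ => ?_
        rw [← Finset.sum_mul, hcol j, zero_mul]
      have e4 : ∑ i : Fin (r + 1), ∑ j, B (v i) (v j) * (x j * y i) = S := by
        rw [Finset.sum_comm, hS]
        refine Finset.sum_congr rfl fun j _ => Finset.sum_congr rfl fun i _ => ?_
        rw [hsymm (v i) (v j)]
      have expand : ∑ i, ∑ j, g i j =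
          (∑ i, ∑ j, B (v i) (v j) * (x i * y j))
          + (∑ i, ∑ j, B (v i) (v j) * (x j * y i))
          - (∑ i, ∑ j, B (v i) (v j) * (x i * y i))
          - (∑ i, ∑ j, B (v i) (v j) * (x j * y j)) := by
        simp only [← Finset.sum_add_distrib, ← Finset.sum_sub_distrib]
        refine Finset.sum_congr rfl fun i _ => Finset.sum_congr rfl fun j _ => ?_
        simp only [hg]; ring
      rw [expand, e1, e2, e4, ← hS]
      ring
    have h2S : 2 * S = 2 * P := by rw [← hsplit, ← hfull]
    exact hLHS.trans (mul_left_cancel₀ two_ne_zero h2S)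
  -- connectivity
  have hconn : (SimpleGraph.fromRel (fun i j : Fin (r + 1) => B (v i) (v j) < 0)).Connected := by
    set G := SimpleGraph.fromRel (fun i j : Fin (r + 1) => B (v i) (v j) < 0) with hG
    refine ⟨fun a b => ?_⟩
    by_contra hab
    set S : Finset (Fin (r + 1)) := Finset.univ.filter (fun k => G.Reachable a k) with hSdef
    have haS : a ∈ S := by
      simp only [hSdef, Finset.mem_filter, Finset.mem_univ, true_and]
      exact SimpleGraph.Reachable.refl a
    have hbS : b ∉ S := by simpa [hSdef] using hab
    have hcross : ∀ k ∈ S, ∀ l, l ∉ S → B (v k) (v l) = 0 := by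
      intro k hk l hl
      have hne : k ≠ l := by rintro rfl; exact hl hk
      refine le_antisymm (hobtuse k l hne) ?_
      by_contra hneg
      push_neg at hneg
      have hadj : G.Adj k l := by
        rw [hG, SimpleGraph.fromRel_adj]
        exact ⟨hne, Or.inl hneg⟩
      have hk' : G.Reachable a k := by simpa [hSdef] using hk
      have : G.Reachable a l := hk'.trans hadj.reachable
      exact hl (by simpa [hSdef] using this)
    have hBw : B (∑ k ∈ S, v k) (∑ k ∈ S, v k) = 0 := by
      rw [map_sum B v S, LinearMap.sum_apply]
      refine Finset.sum_eq_zero fun k hk => ?_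
      have htot : ∑ l, B (v k) (v l) = 0 := hrow k
      rw [← Finset.sum_add_sum_compl S (fun l => B (v k) (v l))] at htot
      have hcompl : ∑ l ∈ Sᶜ, B (v k) (v l) = 0 :=
        Finset.sum_eq_zero fun l hl => hcross k hk l (Finset.mem_compl.1 hl)
      rw [hcompl, add_zero] at htot
      rw [map_sum]
      exact htot
    have hw0 : (∑ k ∈ S, v k) = 0 := by
      by_contra h
      exact absurd hBw (ne_of_gt (hpos _ h))
    set ind : Fin (r + 1) → ℤ := ∑ k ∈ S, Pi.single k 1 with hind
    have hx0 : Φ ind = 0 := by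
      rw [hind, hΦdef, map_sum]
      rw [Finset.sum_congr rfl fun k (_ : k ∈ S) => by
        exact (Fintype.linearCombination_apply_single ℤ v k 1).trans (@MulAction.one_smul ℤ M _ Module.toDistribMulAction.toMulAction (v k))]
      exact hw0
    have ha : ind a = 1 := by simp [hind, Finset.sum_apply, Finset.sum_pi_single, haS]
    have hb : ind b = 0 := by simp [hind, Finset.sum_apply, Finset.sum_pi_single, hbS]
    obtain ⟨c, hc⟩ := (hker _).1 hx0
    have h1 : (1 : ℤ) = c := by rw [← ha]; exact hc a
    have h0 : (0 : ℤ) = c := by rw [← hb]; exact hc b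
    exact one_ne_zero (h1.trans h0.symm)
  exact ⟨hconn, hsurj, hker, hquad⟩
end

section
/- Let G be a connected multigraph as above, and let x be a nonzero element of the graph lattice Λ(G). Then x is irreducible if and only if there exists a subset R ⊆ V such that x = [R] in Λ(G) and both R and V∖R induce connected subgraphs of G. -/
/-- The underlying simple graph of the multigraph with `e u v` edges joining `u` and
`v`: vertices `u ≠ v` are adjacent iff there is at least one edge between them. -/
def mgraph {V : Type*} (e : V → V → ℕ) : SimpleGraph V :=
  SimpleGraph.fromRel (fun u v => 0 < e u v)

/-- The bilinear pairing on `ℤ^V` given by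
`B(x,y) = Σ_{unordered pairs {u,w}} e(u,w)(x_u − x_w)(y_u − y_w)`
(written as half of the sum over ordered pairs; the division is exact since `e` is
symmetric). -/
def Bform {V : Type*} [Fintype V] (e : V → V → ℕ) (x y : V → ℤ) : ℤ :=
  (∑ u, ∑ w, (e u w : ℤ) * (x u - x w) * (y u - y w)) / 2

/-- The graph lattice `Λ(G) = ℤ^V / ℤ·[V]`, the quotient of `ℤ^V` by the span of the
all-ones vector. -/
abbrev GLat (V : Type*) [Fintype V] :=
  (V → ℤ) ⧸ (Submodule.span ℤ {(fun _ => (1 : ℤ) : V → ℤ)})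

/-- The class of `x : ℤ^V` in the graph lattice `Λ(G)`. -/
abbrev glmk {V : Type*} [Fintype V] (x : V → ℤ) : GLat V := Submodule.Quotient.mk x

/-- The pairing induced by `Bform` on the graph lattice, computed on (arbitrary)
representatives; it is well defined since `Bform` vanishes against constant vectors. -/
noncomputable def qform {V : Type*} [Fintype V] (e : V → V → ℕ) (a b : GLat V) : ℤ :=
  Bform e (Quotient.out a) (Quotient.out b)

/-- The indicator vector `[R] ∈ ℤ^V` of a finite subset `R ⊆ V`. -/
def indFn {V : Type*} [DecidableEq V] (R : Finset V) : V → ℤ :=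
  fun u => if u ∈ R then 1 else 0

set_option linter.unusedSectionVars false

section Helpers
variable {V : Type*} [Fintype V] [DecidableEq V]

/-- The doubled bilinear form (numerator of `Bform`). -/
def B2 (e : V → V → ℕ) (x y : V → ℤ) : ℤ :=
  ∑ u, ∑ w, (e u w : ℤ) * (x u - x w) * (y u - y w)

lemma Bform_eq_B2 (e : V → V → ℕ) (x y : V → ℤ) : Bform e x y = B2 e x y / 2 := rfl

lemma glmk_out (a : GLat V) : glmk (Quotient.out a) = a := Quotient.out_eq' a

lemma glmk_eq_iff {f g : V → ℤ} : glmk f = glmk g ↔ ∃ c : ℤ, ∀ u, f u = g u + c := by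
  rw [Submodule.Quotient.eq, Submodule.mem_span_singleton]
  constructor
  · rintro ⟨c, hc⟩
    refine ⟨c, fun u => ?_⟩
    have := congrFun hc u
    simp only [Pi.smul_apply, smul_eq_mul, mul_one, Pi.sub_apply] at this
    linarith
  · rintro ⟨c, hc⟩
    refine ⟨c, ?_⟩
    funext u
    simp only [Pi.smul_apply, smul_eq_mul, mul_one, Pi.sub_apply, hc u]
    ring

lemma glmk_eq_zero_iff {f : V → ℤ} : glmk f = 0 ↔ ∃ c : ℤ, ∀ u, f u = c := by
  have : (0 : GLat V) = glmk (fun _ => 0) := (Submodule.Quotient.mk_zero _).symm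
  rw [this, glmk_eq_iff]
  simp

lemma glmk_add (f g : V → ℤ) : glmk (fun u => f u + g u) = glmk f + glmk g := by
  have : (fun u => f u + g u) = f + g := rfl
  rw [this]
  exact Submodule.Quotient.mk_add ..

lemma B2_shift (e : V → V → ℕ) (f g f' g' : V → ℤ) (c d : ℤ)
    (hf : ∀ u, f' u = f u + c) (hg : ∀ u, g' u = g u + d) :
    B2 e f' g' = B2 e f g := by
  unfold B2
  refine Finset.sum_congr rfl fun u _ => Finset.sum_congr rfl fun w _ => ?_
  rw [hf u, hf w, hg u, hg w]; ring

lemma qform_glmk (e : V → V → ℕ) (f g : V → ℤ) :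
    qform e (glmk f) (glmk g) = B2 e f g / 2 := by
  obtain ⟨c, hc⟩ := glmk_eq_iff.mp (glmk_out (glmk f))
  obtain ⟨d, hd⟩ := glmk_eq_iff.mp (glmk_out (glmk g))
  rw [qform, Bform_eq_B2, B2_shift e f g _ _ c d hc hd]

lemma exists_not_mem_of_ne_univ {R : Finset V} (hnu : R ≠ Finset.univ) : ∃ b, b ∉ R := by
  by_contra h
  push_neg at h
  exact hnu (Finset.eq_univ_iff_forall.mpr h)

lemma glmk_ind_ne_zero {R : Finset V} (hne : R.Nonempty) (hnu : R ≠ Finset.univ) :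
    glmk (indFn R) ≠ 0 := by
  intro h
  obtain ⟨c, hc⟩ := glmk_eq_zero_iff.mp h
  obtain ⟨a, ha⟩ := hne
  obtain ⟨b, hb⟩ := exists_not_mem_of_ne_univ hnu
  have h1 := hc a
  have h2 := hc b
  simp only [indFn, if_pos ha, if_neg hb] at h1 h2
  omega

lemma mgraph_adj (e : V → V → ℕ) (hsym : ∀ u v, e u v = e v u) {u v : V} :
    (mgraph e).Adj u v ↔ u ≠ v ∧ 0 < e u v := by
  rw [mgraph, SimpleGraph.fromRel_adj]
  constructor
  · rintro ⟨h, h2 | h2⟩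
    · exact ⟨h, h2⟩
    · exact ⟨h, by rw [hsym]; exact h2⟩
  · rintro ⟨h, h2⟩; exact ⟨h, Or.inl h2⟩

lemma const_of_connected (e : V → V → ℕ) (hsym : ∀ u v, e u v = e v u) (S : Set V)
    (hc : (SimpleGraph.induce S (mgraph e)).Connected) (g : V → ℤ)
    (h : ∀ a b : V, a ∈ S → b ∈ S → 0 < e a b → g a = g b) :
    ∀ a b : V, a ∈ S → b ∈ S → g a = g b := by
  have key : ∀ (u v : S) (p : (SimpleGraph.induce S (mgraph e)).Walk u v), g u = g v := by
    intro u v p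
    induction p with
    | nil => rfl
    | cons hadj p ih =>
      rename_i a b c
      have hadj' : (mgraph e).Adj (a : V) (b : V) := hadj
      rw [mgraph_adj e hsym] at hadj'
      exact (h a b a.2 b.2 hadj'.2).trans ih
  intro a b ha hb
  obtain ⟨p⟩ := hc.preconnected ⟨a, ha⟩ ⟨b, hb⟩
  exact key _ _ p

lemma exists_cross (e : V → V → ℕ) (hsym : ∀ u v, e u v = e v u)
    (hconn : (mgraph e).Connected) (S : Finset V) (a b : V) (ha : a ∈ S) (hb : b ∉ S) :
    ∃ u w, u ∈ S ∧ w ∉ S ∧ 0 < e u w := by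
  obtain ⟨p⟩ := hconn.preconnected a b
  revert ha
  induction p with
  | nil => intro ha; exact absurd ha hb
  | cons hadj p ih =>
    intro ha
    rename_i u c _
    by_cases hc : c ∈ S
    · exact ih hb hc
    · rw [mgraph_adj e hsym] at hadj
      exact ⟨u, c, ha, hc, hadj.2⟩

lemma split_of_not_connected (e : V → V → ℕ) (hsym : ∀ u v, e u v = e v u)
    (S : Finset V) (hne : S.Nonempty)
    (h : ¬ (SimpleGraph.induce (↑S : Set V) (mgraph e)).Connected) :
    ∃ S₁ S₂ : Finset V, S₁.Nonempty ∧ S₂.Nonempty ∧ S₁ ∪ S₂ = S ∧ Disjoint S₁ S₂ ∧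
      ∀ a b, a ∈ S₁ → b ∈ S₂ → e a b = 0 := by
  classical
  obtain ⟨a0, ha0⟩ := hne
  have hnonempty : Nonempty (↑S : Set V) := ⟨⟨a0, Finset.mem_coe.mpr ha0⟩⟩
  set G := SimpleGraph.induce (↑S : Set V) (mgraph e) with hG
  have hpre : ¬ G.Preconnected := by
    intro hp
    exact h ((SimpleGraph.connected_iff _).mpr ⟨hp, hnonempty⟩)
  rw [SimpleGraph.Preconnected] at hpre
  push_neg at hpre
  obtain ⟨u, v, huv⟩ := hpre
  let P : V → Prop := fun w => ∃ hw : w ∈ (↑S : Set V), G.Reachable u ⟨w, hw⟩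
  have hPiff : ∀ (w : (↑S : Set V)), P ↑w ↔ G.Reachable u w := by
    intro w
    constructor
    · rintro ⟨hw, hr⟩; rwa [Subtype.coe_eta] at hr
    · intro hr; exact ⟨w.2, by rwa [Subtype.coe_eta]⟩
  set S₁ := S.filter P with hS₁
  set S₂ := S \ S₁ with hS₂
  have hmem1 : ∀ w, w ∈ S₁ ↔ w ∈ S ∧ P w := fun w => Finset.mem_filter
  refine ⟨S₁, S₂, ⟨u, ?_⟩, ⟨v, ?_⟩,
    Finset.union_sdiff_of_subset (Finset.filter_subset _ _), Finset.disjoint_sdiff, ?_⟩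
  · exact (hmem1 _).mpr ⟨Finset.mem_coe.mp u.2, (hPiff u).mpr (SimpleGraph.Reachable.refl u)⟩
  · refine Finset.mem_sdiff.mpr ⟨Finset.mem_coe.mp v.2, fun hv => ?_⟩
    exact huv ((hPiff v).mp ((hmem1 _).mp hv).2)
  · intro a b ha hb
    by_contra hab
    have hpos : 0 < e a b := Nat.pos_of_ne_zero hab
    obtain ⟨hbS, hbn⟩ := Finset.mem_sdiff.mp hb
    obtain ⟨haS, hPa⟩ := (hmem1 _).mp ha
    have hb' : b ∈ (↑S : Set V) := Finset.mem_coe.mpr hbS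
    have ha' : a ∈ (↑S : Set V) := Finset.mem_coe.mpr haS
    have hadj : G.Adj ⟨a, ha'⟩ ⟨b, hb'⟩ := by
      show (mgraph e).Adj a b
      rw [mgraph_adj e hsym]
      refine ⟨?_, hpos⟩
      rintro rfl
      exact hbn ha
    obtain ⟨hw, hr⟩ := hPa
    have hreach : G.Reachable u ⟨b, hb'⟩ := hr.trans hadj.reachable
    exact hbn ((hmem1 b).mpr ⟨hbS, (hPiff ⟨b, hb'⟩).mpr hreach⟩)

lemma int_aux (d s : ℤ) (hs : s = -1 ∨ s = 0 ∨ s = 1) : d * (s - d) ≤ 0 := by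
  rcases hs with rfl | rfl | rfl
  · rcases le_or_gt 0 d with h | h
    · nlinarith
    · nlinarith [show d ≤ -1 from by omega]
  · nlinarith [sq_nonneg d]
  · rcases le_or_gt 1 d with h | h
    · nlinarith
    · nlinarith [show d ≤ 0 from by omega]

/-- The hard ("if") direction: the class of the indicator of a subset with connected
halves is irreducible. -/
lemma dir_mpr (e : V → V → ℕ) (hsym : ∀ u v, e u v = e v u)
    (hconn : (mgraph e).Connected) (R : Finset V)
    (hRc : (SimpleGraph.induce (↑R : Set V) (mgraph e)).Connected)
    (hRcc : (SimpleGraph.induce (↑(Rᶜ) : Set V) (mgraph e)).Connected) :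
    ¬ ∃ y z : GLat V, y ≠ 0 ∧ z ≠ 0 ∧ glmk (indFn R) = y + z ∧ 0 ≤ qform e y z := by
  rintro ⟨y, z, hy0, hz0, hxyz, hq⟩
  set g : V → ℤ := Quotient.out y with hgdef
  have hyg : glmk g = y := glmk_out y
  have hzg : z = glmk (fun u => indFn R u - g u) := by
    have h1 : glmk (fun u => indFn R u - g u) = glmk (indFn R) - glmk g := by
      rw [eq_sub_iff_add_eq, ← glmk_add]
      congr 1
      funext u; ring
    rw [h1, hyg, hxyz]; abel
  have hq' : 0 ≤ B2 e g (fun u => indFn R u - g u) / 2 := by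
    rw [← qform_glmk, hyg, ← hzg]; exact hq
  have hsval : ∀ u w : V, indFn R u - indFn R w = -1 ∨ indFn R u - indFn R w = 0 ∨
      indFn R u - indFn R w = 1 := by
    intro u w; unfold indFn; split_ifs <;> norm_num
  have hterm : ∀ u w, (e u w : ℤ) * (g u - g w) *
      ((indFn R u - g u) - (indFn R w - g w)) ≤ 0 := by
    intro u w
    have he : (0:ℤ) ≤ (e u w : ℤ) := Int.natCast_nonneg _
    have key := int_aux (g u - g w) (indFn R u - indFn R w) (hsval u w)
    calc (e u w : ℤ) * (g u - g w) * ((indFn R u - g u) - (indFn R w - g w))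
        = (e u w : ℤ) * ((g u - g w) * ((indFn R u - indFn R w) - (g u - g w))) := by ring
      _ ≤ 0 := by nlinarith
  have hB2le : B2 e g (fun u => indFn R u - g u) ≤ 0 := by
    unfold B2
    exact Finset.sum_nonpos fun u _ => Finset.sum_nonpos fun w _ => hterm u w
  have hB2 : B2 e g (fun u => indFn R u - g u) = 0 := by omega
  have hzero : ∀ u w, (e u w : ℤ) * (g u - g w) *
      ((indFn R u - g u) - (indFn R w - g w)) = 0 := by
    have hB2' : ∑ u, ∑ w, (e u w : ℤ) * (g u - g w) *
        ((indFn R u - g u) - (indFn R w - g w)) = 0 := hB2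
    have h1 := (Finset.sum_eq_zero_iff_of_nonpos
      (fun u _ => Finset.sum_nonpos fun w _ => hterm u w)).mp hB2'
    intro u w
    exact (Finset.sum_eq_zero_iff_of_nonpos (fun w _ => hterm u w)).mp
      (h1 u (Finset.mem_univ u)) w (Finset.mem_univ w)
  -- g is constant on R and on Rᶜ
  have hgR : ∀ a b : V, a ∈ (↑R : Set V) → b ∈ (↑R : Set V) → g a = g b := by
    apply const_of_connected e hsym _ hRc
    intro a b ha hb hpos
    have ha' : a ∈ R := Finset.mem_coe.mp ha
    have hb' : b ∈ R := Finset.mem_coe.mp hb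
    have h0 := hzero a b
    have h2 : (indFn R a - g a) - (indFn R b - g b) = -(g a - g b) := by
      unfold indFn; rw [if_pos ha', if_pos hb']; ring
    rw [h2] at h0
    have he : (0:ℤ) < (e a b : ℤ) := by exact_mod_cast hpos
    by_contra hne
    have hd : g a - g b ≠ 0 := fun hh => hne (by linarith)
    have hsq : 0 < (g a - g b)^2 := by positivity
    nlinarith
  have hgRc : ∀ a b : V, a ∈ (↑(Rᶜ) : Set V) → b ∈ (↑(Rᶜ) : Set V) → g a = g b := by
    apply const_of_connected e hsym _ hRcc
    intro a b ha hb hpos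
    have ha' : a ∉ R := Finset.mem_compl.mp (Finset.mem_coe.mp ha)
    have hb' : b ∉ R := Finset.mem_compl.mp (Finset.mem_coe.mp hb)
    have h0 := hzero a b
    have h2 : (indFn R a - g a) - (indFn R b - g b) = -(g a - g b) := by
      unfold indFn; rw [if_neg ha', if_neg hb']; ring
    rw [h2] at h0
    have he : (0:ℤ) < (e a b : ℤ) := by exact_mod_cast hpos
    by_contra hne
    have hd : g a - g b ≠ 0 := fun hh => hne (by linarith)
    have hsq : 0 < (g a - g b)^2 := by positivity
    nlinarith
  -- cross edge
  obtain ⟨r0, hr0⟩ := hRc.nonempty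
  obtain ⟨s0, hs0⟩ := hRcc.nonempty
  have hr0' : r0 ∈ R := Finset.mem_coe.mp hr0
  have hs0' : s0 ∉ R := Finset.mem_compl.mp (Finset.mem_coe.mp hs0)
  obtain ⟨u0, w0, hu0, hw0, hpos⟩ := exists_cross e hsym hconn R r0 s0 hr0' hs0'
  have h0 := hzero u0 w0
  have h2 : (indFn R u0 - g u0) - (indFn R w0 - g w0) = 1 - (g u0 - g w0) := by
    unfold indFn; rw [if_pos hu0, if_neg hw0]; ring
  rw [h2] at h0
  have he : (e u0 w0 : ℤ) ≠ 0 := by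
    have : (0:ℤ) < (e u0 w0 : ℤ) := by exact_mod_cast hpos
    omega
  have hd : (g u0 - g w0) * (1 - (g u0 - g w0)) = 0 := by
    rcases mul_eq_zero.mp (by rw [mul_assoc] at h0; exact h0) with h | h
    · exact absurd h he
    · exact h
  have memcompl : ∀ v : V, v ∉ R → v ∈ (↑(Rᶜ) : Set V) := fun v hv =>
    Finset.mem_coe.mpr (Finset.mem_compl.mpr hv)
  rcases mul_eq_zero.mp hd with h | h
  · -- g is globally constant, so y = 0
    apply hy0
    rw [← hyg]
    refine glmk_eq_zero_iff.mpr ⟨g u0, fun v => ?_⟩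
    by_cases hv : v ∈ R
    · exact hgR v u0 (Finset.mem_coe.mpr hv) (Finset.mem_coe.mpr hu0)
    · have h3 : g v = g w0 := hgRc v w0 (memcompl v hv) (memcompl w0 hw0)
      omega
  · -- g = indFn R + const, so z = 0
    apply hz0
    rw [hzg]
    refine glmk_eq_zero_iff.mpr ⟨-(g w0), fun v => ?_⟩
    by_cases hv : v ∈ R
    · have h3 : g v = g u0 := hgR v u0 (Finset.mem_coe.mpr hv) (Finset.mem_coe.mpr hu0)
      unfold indFn; rw [if_pos hv]; omega
    · have h3 : g v = g w0 := hgRc v w0 (memcompl v hv) (memcompl w0 hw0)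
      unfold indFn; rw [if_neg hv]; omega

end Helpers

/-- A nonzero element `x` of the graph lattice of a connected multigraph `G` is
irreducible (cannot be written `x = y + z` with `y, z ≠ 0` and `y·z ≥ 0`) if and only if
`x = [R]` for some `R ⊆ V` such that both `R` and `V∖R` induce connected subgraphs. -/
theorem stmt11 {V : Type*} [Fintype V] [DecidableEq V] (e : V → V → ℕ)
    (hsym : ∀ u v, e u v = e v u) (hloop : ∀ v, e v v = 0)
    (hconn : (mgraph e).Connected)
    (x : GLat V) (hx : x ≠ 0) :
    (¬ ∃ y z : GLat V, y ≠ 0 ∧ z ≠ 0 ∧ x = y + z ∧ 0 ≤ qform e y z) ↔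
    (∃ R : Finset V, x = glmk (indFn R) ∧
      (SimpleGraph.induce (↑R : Set V) (mgraph e)).Connected ∧
      (SimpleGraph.induce (↑(Rᶜ) : Set V) (mgraph e)).Connected) := by
  constructor
  · intro hirr
    -- Step 1: x is the class of the indicator of its top level set S
    obtain ⟨v0⟩ := hconn.nonempty
    set f : V → ℤ := Quotient.out x with hfdef
    have hxf : glmk f = x := glmk_out x
    obtain ⟨b, -, hmax⟩ := Finset.exists_max_image Finset.univ f ⟨v0, Finset.mem_univ v0⟩
    classical
    set M := f b with hM
    set S := Finset.univ.filter (fun v => f v = M) with hS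
    have hSmem : ∀ v, v ∈ S ↔ f v = M := fun v => by simp [hS]
    have hbS : b ∈ S := (hSmem b).mpr rfl
    have hSne : S.Nonempty := ⟨b, hbS⟩
    have hSnu : S ≠ Finset.univ := by
      intro h
      apply hx
      rw [← hxf]
      exact glmk_eq_zero_iff.mpr ⟨M, fun v => (hSmem v).mp (h ▸ Finset.mem_univ v)⟩
    obtain ⟨v1, hv1⟩ := exists_not_mem_of_ne_univ hSnu
    have hy0 : glmk (indFn S) ≠ 0 := glmk_ind_ne_zero hSne hSnu
    have hxyz : x = glmk (indFn S) + glmk (fun u => f u - indFn S u) := by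
      rw [← glmk_add, ← hxf]
      congr 1
      funext u; ring
    have hqpos : 0 ≤ qform e (glmk (indFn S)) (glmk (fun u => f u - indFn S u)) := by
      rw [qform_glmk]
      apply Int.ediv_nonneg _ (by norm_num)
      apply Finset.sum_nonneg; intro u _
      apply Finset.sum_nonneg; intro w _
      have he : (0:ℤ) ≤ (e u w : ℤ) := Int.natCast_nonneg _
      have hfu : f u ≤ M := hmax u (Finset.mem_univ u)
      have hfw : f w ≤ M := hmax w (Finset.mem_univ w)
      by_cases hu : u ∈ S <;> by_cases hw : w ∈ S <;>
        simp only [indFn, hu, hw, if_true, if_false]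
      · nlinarith
      · have h1 : f u = M := (hSmem u).mp hu
        have h2 : f w ≠ M := fun h => hw ((hSmem w).mpr h)
        nlinarith [show (0:ℤ) ≤ f u - 1 - f w from by omega]
      · have h1 : f u ≠ M := fun h => hu ((hSmem u).mpr h)
        have h2 : f w = M := (hSmem w).mp hw
        nlinarith [show f u - f w + 1 ≤ 0 from by omega]
      · nlinarith
    have hz : glmk (fun u => f u - indFn S u) = 0 := by
      by_contra hz
      exact hirr ⟨_, _, hy0, hz, hxyz, hqpos⟩
    have hxS : x = glmk (indFn S) := by rw [hxyz, hz, add_zero]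
    refine ⟨S, hxS, ?_, ?_⟩
    · -- S induces a connected subgraph
      by_contra hnc
      obtain ⟨S₁, S₂, h1ne, h2ne, hU, hdisj, hE⟩ := split_of_not_connected e hsym S hSne hnc
      have hd1 : ∀ u, u ∈ S₁ → u ∉ S₂ := fun u h => Finset.disjoint_left.mp hdisj h
      have hsub1 : S₁ ⊆ S := hU ▸ Finset.subset_union_left
      have hsub2 : S₂ ⊆ S := hU ▸ Finset.subset_union_right
      have hsum : x = glmk (indFn S₁) + glmk (indFn S₂) := by
        rw [hxS, ← glmk_add]
        congr 1
        funext u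
        have h3 : u ∈ S ↔ u ∈ S₁ ∨ u ∈ S₂ := by rw [← hU, Finset.mem_union]
        unfold indFn
        by_cases h1 : u ∈ S₁ <;> by_cases h2 : u ∈ S₂
        · exact absurd h2 (hd1 u h1)
        · rw [if_pos (h3.mpr (Or.inl h1)), if_pos h1, if_neg h2]; ring
        · rw [if_pos (h3.mpr (Or.inr h2)), if_neg h1, if_pos h2]; ring
        · rw [if_neg (fun h => by rcases h3.mp h with h | h <;> tauto), if_neg h1,
            if_neg h2]; ring
      have hq0 : 0 ≤ qform e (glmk (indFn S₁)) (glmk (indFn S₂)) := by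
        rw [qform_glmk]
        have hzero : B2 e (indFn S₁) (indFn S₂) = 0 := by
          unfold B2
          apply Finset.sum_eq_zero; intro u _
          apply Finset.sum_eq_zero; intro w _
          rcases Nat.eq_zero_or_pos (e u w) with h | hpos
          · rw [h]; push_cast; ring
          · have hcases : indFn S₁ u - indFn S₁ w = 0 ∨ indFn S₂ u - indFn S₂ w = 0 := by
              by_cases h1 : u ∈ S₁ <;> by_cases h2 : w ∈ S₁
              · left; unfold indFn; rw [if_pos h1, if_pos h2]; ring
              · right
                have hu2 : u ∉ S₂ := hd1 u h1
                have hw2 : w ∉ S₂ := fun hw => by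
                  have := hE u w h1 hw; omega
                unfold indFn; rw [if_neg hu2, if_neg hw2]; ring
              · right
                have hw2 : w ∉ S₂ := hd1 w h2
                have hu2 : u ∉ S₂ := fun hu => by
                  have := hE w u h2 hu; rw [hsym w u] at this; omega
                unfold indFn; rw [if_neg hu2, if_neg hw2]; ring
              · left; unfold indFn; rw [if_neg h1, if_neg h2]; ring
            rcases hcases with h | h
            · rw [h, mul_zero, zero_mul]
            · rw [h, mul_zero]
        rw [hzero]
        norm_num
      exact hirr ⟨_, _, glmk_ind_ne_zero h1ne (fun h =>
          hSnu (Finset.univ_subset_iff.mp (h ▸ hsub1))),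
        glmk_ind_ne_zero h2ne (fun h =>
          hSnu (Finset.univ_subset_iff.mp (h ▸ hsub2))), hsum, hq0⟩
    · -- Sᶜ induces a connected subgraph
      by_contra hnc
      have hScne : Sᶜ.Nonempty := ⟨v1, Finset.mem_compl.mpr hv1⟩
      obtain ⟨S₁, S₂, h1ne, h2ne, hU, hdisj, hE⟩ :=
        split_of_not_connected e hsym Sᶜ hScne hnc
      have hd1 : ∀ u, u ∈ S₁ → u ∉ S₂ := fun u h => Finset.disjoint_left.mp hdisj h
      have hsub1 : S₁ ⊆ Sᶜ := hU ▸ Finset.subset_union_left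
      have hsub2 : S₂ ⊆ Sᶜ := hU ▸ Finset.subset_union_right
      set A := S ∪ S₁ with hA
      set B := S ∪ S₂ with hB
      have hcover : ∀ u, u ∉ S → (u ∈ S₁ ∨ u ∈ S₂) := fun u hu => by
        rw [← Finset.mem_union, hU]; exact Finset.mem_compl.mpr hu
      have hsum : x = glmk (indFn A) + glmk (indFn B) := by
        rw [hxS, ← glmk_add, glmk_eq_iff]
        refine ⟨-1, fun u => ?_⟩
        by_cases hu : u ∈ S
        · have huA : u ∈ A := Finset.mem_union_left _ hu
          have huB : u ∈ B := Finset.mem_union_left _ hu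
          unfold indFn; rw [if_pos hu, if_pos huA, if_pos huB]; ring
        · rcases hcover u hu with h | h
          · have huA : u ∈ A := Finset.mem_union_right _ h
            have huB : u ∉ B := by
              rw [hB, Finset.mem_union]
              rintro (h' | h')
              · exact hu h'
              · exact hd1 u h h'
            unfold indFn; rw [if_neg hu, if_pos huA, if_neg huB]; ring
          · have huB : u ∈ B := Finset.mem_union_right _ h
            have huA : u ∉ A := by
              rw [hA, Finset.mem_union]
              rintro (h' | h')
              · exact hu h'
              · exact hd1 u h' h
            unfold indFn; rw [if_neg hu, if_neg huA, if_pos huB]; ring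
      have hAne : A.Nonempty := ⟨b, Finset.mem_union_left _ hbS⟩
      have hBne : B.Nonempty := ⟨b, Finset.mem_union_left _ hbS⟩
      obtain ⟨t2, ht2⟩ := h2ne
      obtain ⟨t1, ht1⟩ := h1ne
      have hAnu : A ≠ Finset.univ := by
        intro h
        have : t2 ∈ A := h ▸ Finset.mem_univ t2
        rw [hA, Finset.mem_union] at this
        rcases this with h' | h'
        · exact Finset.mem_compl.mp (hsub2 ht2) h'
        · exact hd1 t2 h' ht2
      have hBnu : B ≠ Finset.univ := by
        intro h
        have : t1 ∈ B := h ▸ Finset.mem_univ t1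
        rw [hB, Finset.mem_union] at this
        rcases this with h' | h'
        · exact Finset.mem_compl.mp (hsub1 ht1) h'
        · exact hd1 t1 ht1 h'
      have hq0 : 0 ≤ qform e (glmk (indFn A)) (glmk (indFn B)) := by
        rw [qform_glmk]
        have hzero : B2 e (indFn A) (indFn B) = 0 := by
          unfold B2
          apply Finset.sum_eq_zero; intro u _
          apply Finset.sum_eq_zero; intro w _
          rcases Nat.eq_zero_or_pos (e u w) with h | hpos
          · rw [h]; push_cast; ring
          · have hcases : indFn A u - indFn A w = 0 ∨ indFn B u - indFn B w = 0 := by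
              by_cases h1 : u ∈ A <;> by_cases h2 : w ∈ A
              · left; unfold indFn; rw [if_pos h1, if_pos h2]; ring
              · -- u ∈ A, w ∉ A : then w ∈ S₂ and both u, w ∈ B
                right
                have hwS : w ∉ S := fun h => h2 (Finset.mem_union_left _ h)
                have hw1 : w ∉ S₁ := fun h => h2 (Finset.mem_union_right _ h)
                have hw2 : w ∈ S₂ := (hcover w hwS).resolve_left hw1
                have huB : u ∈ B := by
                  rcases Finset.mem_union.mp h1 with h' | h'
                  · exact Finset.mem_union_left _ h'
                  · exact absurd (hE u w h' hw2) (by omega)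
                have hwB : w ∈ B := Finset.mem_union_right _ hw2
                unfold indFn; rw [if_pos huB, if_pos hwB]; ring
              · right
                have huS : u ∉ S := fun h => h1 (Finset.mem_union_left _ h)
                have hu1 : u ∉ S₁ := fun h => h1 (Finset.mem_union_right _ h)
                have hu2 : u ∈ S₂ := (hcover u huS).resolve_left hu1
                have hwB : w ∈ B := by
                  rcases Finset.mem_union.mp h2 with h' | h'
                  · exact Finset.mem_union_left _ h'
                  · refine absurd (hE w u h' hu2) ?_
                    rw [hsym w u]; omega
                have huB : u ∈ B := Finset.mem_union_right _ hu2
                unfold indFn; rw [if_pos huB, if_pos hwB]; ring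
              · left; unfold indFn; rw [if_neg h1, if_neg h2]; ring
            rcases hcases with h | h
            · rw [h, mul_zero, zero_mul]
            · rw [h, mul_zero]
        rw [hzero]
        norm_num
      exact hirr ⟨_, _, glmk_ind_ne_zero hAne hAnu, glmk_ind_ne_zero hBne hBnu,
        hsum, hq0⟩
  · rintro ⟨R, hxR, hRc, hRcc⟩
    rw [hxR]
    exact dir_mpr e hsym hconn R hRc hRcc
end

section
/- Let G be a connected multigraph as above which is 2-connected, let v ∈ V, and suppose [{v}] = x + y in Λ(G) with x·y = −1. Then there is a partition of V∖{v} into nonempty sets R and S, each inducing a connected subgraph of G, with exactly one edge of G between R and S (i.e. Σ_{u∈R, w∈S} e(u,w) = 1), such that {x, y} = {[R ∪ {v}], [S ∪ {v}]} in Λ(G). Furthermore, there exist unique vertices u_1, u_2 ∈ V∖{v} with x·[{u_1}] = 1 and y·[{u_2}] = 1, and every vertex w ∉ {v, u_1, u_2} satisfies x·[{w}] ≤ 0 and y·[{w}] ≤ 0. -/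
set_option linter.unusedSectionVars false
section aux
variable {V : Type*} [Fintype V] [DecidableEq V]

lemma bform_shift_left (e : V → V → ℕ) (x y : V → ℤ) (c : ℤ) :
    Bform e (fun u => x u + c) y = Bform e x y := by
  simp only [Bform, add_sub_add_right_eq_sub]

lemma bform_shift_right (e : V → V → ℕ) (x y : V → ℤ) (c : ℤ) :
    Bform e x (fun u => y u + c) = Bform e x y := by
  simp only [Bform, add_sub_add_right_eq_sub]

lemma rep_eq (a : V → ℤ) : ∃ c : ℤ, Quotient.out (glmk a) = fun u => a u + c := by
  have h : glmk (Quotient.out (glmk a)) = glmk a := Quotient.out_eq _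
  rw [Submodule.Quotient.eq, Submodule.mem_span_singleton] at h
  obtain ⟨c, hc⟩ := h
  refine ⟨c, funext fun u => ?_⟩
  have := congrFun hc u
  simp only [Pi.smul_apply, smul_eq_mul, mul_one, Pi.sub_apply] at this
  linarith

lemma qform_mk (e : V → V → ℕ) (a b : V → ℤ) :
    qform e (glmk a) (glmk b) = Bform e a b := by
  obtain ⟨c, hc⟩ := rep_eq a
  obtain ⟨d, hd⟩ := rep_eq b
  rw [qform, hc, hd, bform_shift_left, bform_shift_right]

lemma glmk_sub (a b : V → ℤ) : glmk (fun u => a u - b u) = glmk a - glmk b := by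
  rw [← Submodule.Quotient.mk_sub]; rfl

lemma glmk_eq_of_const (a b : V → ℤ) (c : ℤ) (h : ∀ u, a u - b u = c) :
    glmk a = glmk b := by
  rw [Submodule.Quotient.eq, Submodule.mem_span_singleton]
  exact ⟨c, by funext u; simp [← h u]⟩

lemma bform_single (e : V → V → ℕ) (hsym : ∀ u w, e u w = e w u) (hloop : ∀ u, e u u = 0)
    (x : V → ℤ) (u : V) :
    Bform e x (indFn {u}) = ∑ w, (e u w : ℤ) * (x u - x w) := by
  have key : (∑ u', ∑ w', (e u' w' : ℤ) * (x u' - x w') * (indFn {u} u' - indFn {u} w'))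
      = 2 * ∑ w, (e u w : ℤ) * (x u - x w) := by
    rw [← Finset.add_sum_erase _ _ (Finset.mem_univ u)]
    have h1 : (∑ w', (e u w' : ℤ) * (x u - x w') * (indFn {u} u - indFn {u} w'))
        = ∑ w, (e u w : ℤ) * (x u - x w) := by
      refine Finset.sum_congr rfl fun w _ => ?_
      by_cases hw : w = u
      · subst hw; ring
      · simp [indFn, hw]
    have h2 : (∑ u' ∈ Finset.univ.erase u, ∑ w',
          (e u' w' : ℤ) * (x u' - x w') * (indFn {u} u' - indFn {u} w'))
        = ∑ u' ∈ Finset.univ.erase u, (e u u' : ℤ) * (x u - x u') := by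
      refine Finset.sum_congr rfl fun u' hu' => ?_
      have hu'u : u' ≠ u := (Finset.mem_erase.mp hu').1
      rw [Finset.sum_eq_single u]
      · have hcast : (e u' u : ℤ) = e u u' := by exact_mod_cast hsym u' u
        simp only [indFn, Finset.mem_singleton, hu'u, if_false, if_true, hcast]
        ring
      · intro w' _ hw'
        simp [indFn, hu'u, hw']
      · intro h; exact absurd (Finset.mem_univ u) h
    rw [h1, h2, Finset.sum_erase_eq_sub (Finset.mem_univ u)]
    have : (e u u : ℤ) * (x u - x u) = 0 := by rw [sub_self]; ring
    rw [this]
    ring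
  rw [Bform, key, Int.mul_ediv_cancel_left _ two_ne_zero]

lemma sum_extract {α : Type*} [Fintype α] [DecidableEq α] (f : α → α → ℤ)
    (hle : ∀ p q, f p q ≤ 0) (hsymm : ∀ p q, f p q = f q p) (hdiag : ∀ p, f p p = 0)
    (hsum : -2 ≤ (∑ p, ∑ q, f p q) ∧ (∑ p, ∑ q, f p q) ≤ -1) :
    ∃ p q, p ≠ q ∧ f p q = -1 ∧
      ∀ a b, ¬(a = p ∧ b = q) → ¬(a = q ∧ b = p) → f a b = 0 := by
  set F : α × α → ℤ := fun p => f p.1 p.2 with hF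
  have htot : (∑ p : α × α, F p) = ∑ p, ∑ q, f p q := by
    rw [← Finset.univ_product_univ, Finset.sum_product]
  have hex : ∃ p : α × α, F p < 0 := by
    by_contra h
    push_neg at h
    have : (∑ p : α × α, F p) = 0 :=
      Finset.sum_eq_zero fun p _ => le_antisymm (hle p.1 p.2) (h p)
    omega
  obtain ⟨p0, hneg⟩ := hex
  have hne : p0.1 ≠ p0.2 := by
    intro h
    have : F p0 = 0 := by rw [hF]; simp only []; rw [h]; exact hdiag p0.2
    omega
  have hswapne : p0.swap ≠ p0 := by
    intro h
    have := congrArg Prod.fst h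
    exact hne (by simpa using this.symm)
  have hswapmem : p0.swap ∈ (Finset.univ : Finset (α × α)).erase p0 :=
    Finset.mem_erase.mpr ⟨hswapne, Finset.mem_univ _⟩
  have hsplit : (∑ p : α × α, F p)
      = F p0 + (F p0.swap + ∑ p ∈ ((Finset.univ : Finset (α × α)).erase p0).erase p0.swap, F p) := by
    rw [← Finset.add_sum_erase _ F (Finset.mem_univ p0), ← Finset.add_sum_erase _ F hswapmem]
  have hFswap : F p0.swap = F p0 := hsymm p0.2 p0.1
  have hrest_nonpos : (∑ p ∈ ((Finset.univ : Finset (α × α)).erase p0).erase p0.swap, F p) ≤ 0 :=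
    Finset.sum_nonpos fun p _ => hle p.1 p.2
  have hFp0 : F p0 = -1 := by omega
  have hrest : (∑ p ∈ ((Finset.univ : Finset (α × α)).erase p0).erase p0.swap, F p) = 0 := by
    omega
  have hzero : ∀ p ∈ ((Finset.univ : Finset (α × α)).erase p0).erase p0.swap, F p = 0 :=
    (Finset.sum_eq_zero_iff_of_nonpos fun p _ => hle p.1 p.2).mp hrest
  refine ⟨p0.1, p0.2, hne, hFp0, fun a b h1 h2 => ?_⟩
  have : (a, b) ∈ ((Finset.univ : Finset (α × α)).erase p0).erase p0.swap := by
    refine Finset.mem_erase.mpr ⟨?_, Finset.mem_erase.mpr ⟨?_, Finset.mem_univ _⟩⟩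
    · intro h; apply h2; rw [Prod.ext_iff] at h; exact ⟨h.1, h.2⟩
    · intro h; apply h1; rw [Prod.ext_iff] at h; exact ⟨h.1, h.2⟩
  exact hzero _ this

end aux

section aux2
variable {V : Type*}

lemma tri_nonpos (E c d : ℤ) (hE : 0 ≤ E) (hc : c = -1 ∨ c = 0 ∨ c = 1) :
    E * d * (c - d) ≤ 0 := by
  have h1 : d * (c - d) ≤ 0 := by
    rcases hc with h | h | h <;> subst h
    · nlinarith [Int.le_self_sq (-d)]
    · nlinarith [sq_nonneg d]
    · nlinarith [Int.le_self_sq d]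
  calc E * d * (c - d) = E * (d * (c - d)) := by ring
    _ ≤ 0 := mul_nonpos_of_nonneg_of_nonpos hE h1

lemma tri_neg_one (E c d : ℤ) (hE : 0 ≤ E) (hc : c = -1 ∨ c = 0 ∨ c = 1)
    (h : E * d * (c - d) = -1) : E = 1 ∧ c = 0 ∧ (d = 1 ∨ d = -1) := by
  have h2 : E * (-(d * (c - d))) = 1 := by linear_combination -h
  rcases Int.mul_eq_one_iff_eq_one_or_neg_one.mp h2 with ⟨hE1, hk⟩ | ⟨hE1, hk⟩
  · have hdc : d * (c - d) = -1 := by linarith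
    refine ⟨hE1, ?_⟩
    rcases hc with h | h | h <;> subst h
    · exfalso
      have hq : d * (d + 1) = 1 := by linear_combination -hdc
      rcases Int.mul_eq_one_iff_eq_one_or_neg_one.mp hq with ⟨h1, h2⟩ | ⟨h1, h2⟩ <;> omega
    · have hq : d * d = 1 := by linear_combination -hdc
      rcases Int.mul_eq_one_iff_eq_one_or_neg_one.mp hq with ⟨h1, h2⟩ | ⟨h1, h2⟩
      · exact ⟨rfl, Or.inl h1⟩
      · exact ⟨rfl, Or.inr h1⟩
    · exfalso
      have hq : d * (d - 1) = 1 := by linear_combination -hdc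
      rcases Int.mul_eq_one_iff_eq_one_or_neg_one.mp hq with ⟨h1, h2⟩ | ⟨h1, h2⟩ <;> omega
  · omega

lemma mgraph_adj_iff (e : V → V → ℕ) (hsym : ∀ u w, e u w = e w u) (u w : V) :
    (mgraph e).Adj u w ↔ u ≠ w ∧ 0 < e u w := by
  rw [mgraph, SimpleGraph.fromRel_adj]
  constructor
  · rintro ⟨h1, h2 | h2⟩
    · exact ⟨h1, h2⟩
    · exact ⟨h1, by rw [hsym]; exact h2⟩
  · rintro ⟨h1, h2⟩; exact ⟨h1, Or.inl h2⟩

end aux2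

section core
variable {V : Type*} [Fintype V] [DecidableEq V]

lemma hmemc (v u : V) (h : u ≠ v) : u ∈ ((({v}ᶜ : Finset V) : Finset V) : Set V) := by
  simp [h]

lemma hnec (v : V) (z : ((({v}ᶜ : Finset V) : Finset V) : Set V)) : (z : V) ≠ v := by
  have := z.2
  simpa using this

lemma core (e : V → V → ℕ)
    (hsym : ∀ u w, e u w = e w u) (hloop : ∀ u, e u u = 0)
    (h2conn : ∀ v : V, (SimpleGraph.induce (({v}ᶜ : Finset V) : Set V) (mgraph e)).Connected)
    (v : V) (ξ : V → ℤ) (u₀ w₀ : V)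
    (hu₀v : u₀ ≠ v) (hw₀v : w₀ ≠ v) (hu₀w₀ : u₀ ≠ w₀)
    (he1 : e u₀ w₀ = 1)
    (hstep : ξ u₀ = ξ w₀ + 1)
    (hother : ∀ u w : V, u ≠ v → w ≠ v → ¬(u = u₀ ∧ w = w₀) → ¬(u = w₀ ∧ w = u₀) →
        0 < e u w → ξ u = ξ w)
    (hvedge : ∀ w : V, w ≠ v → 0 < e v w → ξ w = ξ v ∨ ξ w = ξ v - 1) :
    ∃ R S : Finset V,
      R ∪ S = {v}ᶜ ∧ R ∩ S = ∅ ∧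
      (SimpleGraph.induce (↑R : Set V) (mgraph e)).Connected ∧
      (SimpleGraph.induce (↑S : Set V) (mgraph e)).Connected ∧
      (∑ u ∈ R, ∑ w ∈ S, e u w) = 1 ∧
      glmk ξ = glmk (indFn (R ∪ {v})) ∧
      glmk (fun u => indFn {v} u - ξ u) = glmk (indFn (S ∪ {v})) ∧
      Bform e ξ (indFn {u₀}) = 1 ∧
      (∀ u : V, u ≠ v → Bform e ξ (indFn {u}) = 1 → u = u₀) ∧
      (∀ u : V, u ≠ v → u ≠ u₀ → Bform e ξ (indFn {u}) ≤ 0) ∧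
      Bform e (fun u => indFn {v} u - ξ u) (indFn {w₀}) = 1 ∧
      (∀ u : V, u ≠ v → Bform e (fun u => indFn {v} u - ξ u) (indFn {u}) = 1 → u = w₀) ∧
      (∀ u : V, u ≠ v → u ≠ w₀ → Bform e (fun u => indFn {v} u - ξ u) (indFn {u}) ≤ 0) := by
  classical
  set R : Finset V := Finset.univ.filter (fun u => u ≠ v ∧ ξ u = ξ u₀) with hRdef
  set S : Finset V := Finset.univ.filter (fun u => u ≠ v ∧ ξ u = ξ w₀) with hSdef
  have hmR : ∀ u : V, u ∈ R ↔ u ≠ v ∧ ξ u = ξ u₀ := by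
    intro u; simp [hRdef]
  have hmS : ∀ u : V, u ∈ S ↔ u ≠ v ∧ ξ u = ξ w₀ := by
    intro u; simp [hSdef]
  have hu₀R : u₀ ∈ R := (hmR u₀).mpr ⟨hu₀v, rfl⟩
  have hw₀S : w₀ ∈ S := (hmS w₀).mpr ⟨hw₀v, rfl⟩
  -- two-value claim
  have hstepval : ∀ p q : V, p ≠ v → q ≠ v → 0 < e p q →
      (ξ p = ξ u₀ ∨ ξ p = ξ w₀) → (ξ q = ξ u₀ ∨ ξ q = ξ w₀) := by
    intro p q hp hq hpq hval
    by_cases h1 : p = u₀ ∧ q = w₀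
    · right; rw [h1.2]
    by_cases h2 : p = w₀ ∧ q = u₀
    · left; rw [h2.2]
    rw [← hother p q hp hq h1 h2 hpq]; exact hval
  have hwalkval : ∀ (p q : ((({v}ᶜ : Finset V) : Finset V) : Set V))
      (w : (SimpleGraph.induce ((({v}ᶜ : Finset V) : Finset V) : Set V) (mgraph e)).Walk p q),
      (ξ ↑p = ξ u₀ ∨ ξ ↑p = ξ w₀) → (ξ ↑q = ξ u₀ ∨ ξ ↑q = ξ w₀) := by
    intro p q w
    induction w with
    | nil => exact id
    | @cons pp rr qq hadj wt ih =>
      intro hp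
      apply ih
      have hadjm : (mgraph e).Adj ↑pp ↑rr := hadj
      rw [mgraph_adj_iff e hsym] at hadjm
      exact hstepval ↑pp ↑rr (hnec v pp) (hnec v rr) hadjm.2 hp
  have htv : ∀ u : V, u ≠ v → ξ u = ξ u₀ ∨ ξ u = ξ w₀ := by
    intro u hu
    obtain ⟨w⟩ := (h2conn v).preconnected ⟨u₀, hmemc v u₀ hu₀v⟩ ⟨u, hmemc v u hu⟩
    exact hwalkval _ _ w (Or.inl rfl)
  have hcross : ∀ u w : V, u ≠ v → w ≠ v → ξ u = ξ u₀ → ξ w = ξ w₀ → 0 < e u w →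
      u = u₀ ∧ w = w₀ := by
    intro u w hu hw hxu hxw hpos
    by_cases h1 : u = u₀ ∧ w = w₀
    · exact h1
    by_cases h2 : u = w₀ ∧ w = u₀
    · exfalso; rw [h2.1] at hxu; omega
    · exfalso; have := hother u w hu hw h1 h2 hpos; omega
  -- connectivity of R
  have hreachR : ∀ (p q : ((({v}ᶜ : Finset V) : Finset V) : Set V))
      (w : (SimpleGraph.induce ((({v}ᶜ : Finset V) : Finset V) : Set V) (mgraph e)).Walk p q)
      (hp : (↑p : V) ∈ (↑R : Set V)) (hq : (↑q : V) = u₀),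
      (SimpleGraph.induce (↑R : Set V) (mgraph e)).Reachable ⟨↑p, hp⟩
        ⟨u₀, Finset.mem_coe.mpr hu₀R⟩ := by
    intro p q w
    induction w with
    | nil =>
      intro hp hq
      have heq : (⟨_, hp⟩ : (↑R : Set V)) = ⟨u₀, Finset.mem_coe.mpr hu₀R⟩ := Subtype.ext hq
      rw [heq]
    | @cons pp rr qq hadj wt ih =>
      intro hp hq
      have hadjm : (mgraph e).Adj ↑pp ↑rr := hadj
      rw [mgraph_adj_iff e hsym] at hadjm
      have hpR : (↑pp : V) ∈ R := Finset.mem_coe.mp hp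
      have hpξ : ξ ↑pp = ξ u₀ := ((hmR _).mp hpR).2
      by_cases hr : ξ ↑rr = ξ u₀
      · have hrR : (↑rr : V) ∈ (↑R : Set V) :=
          Finset.mem_coe.mpr ((hmR _).mpr ⟨hnec v rr, hr⟩)
        have hadj2 : (SimpleGraph.induce (↑R : Set V) (mgraph e)).Adj ⟨↑pp, hp⟩ ⟨↑rr, hrR⟩ := by
          show (mgraph e).Adj ↑pp ↑rr
          rw [mgraph_adj_iff e hsym]; exact hadjm
        exact hadj2.reachable.trans (ih hrR hq)
      · have hr2 : ξ ↑rr = ξ w₀ := (htv ↑rr (hnec v rr)).resolve_left hr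
        have hcr := hcross ↑pp ↑rr (hnec v pp) (hnec v rr) hpξ hr2 hadjm.2
        have : (⟨↑pp, hp⟩ : (↑R : Set V)) = ⟨u₀, Finset.mem_coe.mpr hu₀R⟩ := Subtype.ext hcr.1
        rw [this]
  have hconnR : (SimpleGraph.induce (↑R : Set V) (mgraph e)).Connected := by
    rw [SimpleGraph.connected_iff]
    refine ⟨?_, ⟨⟨u₀, Finset.mem_coe.mpr hu₀R⟩⟩⟩
    rintro ⟨p, hp⟩ ⟨q, hq⟩
    have hpv : p ≠ v := ((hmR p).mp (Finset.mem_coe.mp hp)).1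
    have hqv : q ≠ v := ((hmR q).mp (Finset.mem_coe.mp hq)).1
    obtain ⟨w1⟩ := (h2conn v).preconnected ⟨p, hmemc v p hpv⟩ ⟨u₀, hmemc v u₀ hu₀v⟩
    obtain ⟨w2⟩ := (h2conn v).preconnected ⟨q, hmemc v q hqv⟩ ⟨u₀, hmemc v u₀ hu₀v⟩
    exact (hreachR _ _ w1 hp rfl).trans (hreachR _ _ w2 hq rfl).symm
  -- connectivity of S
  have hreachS : ∀ (p q : ((({v}ᶜ : Finset V) : Finset V) : Set V))
      (w : (SimpleGraph.induce ((({v}ᶜ : Finset V) : Finset V) : Set V) (mgraph e)).Walk p q)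
      (hp : (↑p : V) ∈ (↑S : Set V)) (hq : (↑q : V) = w₀),
      (SimpleGraph.induce (↑S : Set V) (mgraph e)).Reachable ⟨↑p, hp⟩
        ⟨w₀, Finset.mem_coe.mpr hw₀S⟩ := by
    intro p q w
    induction w with
    | nil =>
      intro hp hq
      have heq : (⟨_, hp⟩ : (↑S : Set V)) = ⟨w₀, Finset.mem_coe.mpr hw₀S⟩ := Subtype.ext hq
      rw [heq]
    | @cons pp rr qq hadj wt ih =>
      intro hp hq
      have hadjm : (mgraph e).Adj ↑pp ↑rr := hadj
      rw [mgraph_adj_iff e hsym] at hadjm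
      have hpS : (↑pp : V) ∈ S := Finset.mem_coe.mp hp
      have hpξ : ξ ↑pp = ξ w₀ := ((hmS _).mp hpS).2
      by_cases hr : ξ ↑rr = ξ w₀
      · have hrS : (↑rr : V) ∈ (↑S : Set V) :=
          Finset.mem_coe.mpr ((hmS _).mpr ⟨hnec v rr, hr⟩)
        have hadj2 : (SimpleGraph.induce (↑S : Set V) (mgraph e)).Adj ⟨↑pp, hp⟩ ⟨↑rr, hrS⟩ := by
          show (mgraph e).Adj ↑pp ↑rr
          rw [mgraph_adj_iff e hsym]; exact hadjm
        exact hadj2.reachable.trans (ih hrS hq)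
      · have hr2 : ξ ↑rr = ξ u₀ := (htv ↑rr (hnec v rr)).resolve_right hr
        have hcr := hcross ↑rr ↑pp (hnec v rr) (hnec v pp) hr2 hpξ
          (by rw [hsym]; exact hadjm.2)
        have : (⟨↑pp, hp⟩ : (↑S : Set V)) = ⟨w₀, Finset.mem_coe.mpr hw₀S⟩ := Subtype.ext hcr.2
        rw [this]
  have hconnS : (SimpleGraph.induce (↑S : Set V) (mgraph e)).Connected := by
    rw [SimpleGraph.connected_iff]
    refine ⟨?_, ⟨⟨w₀, Finset.mem_coe.mpr hw₀S⟩⟩⟩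
    rintro ⟨p, hp⟩ ⟨q, hq⟩
    have hpv : p ≠ v := ((hmS p).mp (Finset.mem_coe.mp hp)).1
    have hqv : q ≠ v := ((hmS q).mp (Finset.mem_coe.mp hq)).1
    obtain ⟨w1⟩ := (h2conn v).preconnected ⟨p, hmemc v p hpv⟩ ⟨w₀, hmemc v w₀ hw₀v⟩
    obtain ⟨w2⟩ := (h2conn v).preconnected ⟨q, hmemc v q hqv⟩ ⟨w₀, hmemc v w₀ hw₀v⟩
    exact (hreachS _ _ w1 hp rfl).trans (hreachS _ _ w2 hq rfl).symm
  -- v is adjacent to R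
  have hvR : ∃ r, r ∈ R ∧ 0 < e v r := by
    by_contra hno
    push_neg at hno
    have hnoe : ∀ r, r ∈ R → e v r = 0 := fun r hr => Nat.le_zero.mp (hno r hr)
    have hlem : ∀ (p q : ((({w₀}ᶜ : Finset V) : Finset V) : Set V))
        (w : (SimpleGraph.induce ((({w₀}ᶜ : Finset V) : Finset V) : Set V) (mgraph e)).Walk p q),
        (↑p : V) ∈ R → (↑q : V) = v → False := by
      intro p q w
      induction w with
      | nil =>
        intro hp hq
        exact ((hmR _).mp hp).1 hq
      | @cons pp rr qq hadj wt ih =>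
        intro hp hq
        have hadjm : (mgraph e).Adj ↑pp ↑rr := hadj
        rw [mgraph_adj_iff e hsym] at hadjm
        by_cases hrR : (↑rr : V) ∈ R
        · exact ih hrR hq
        by_cases hrv : (↑rr : V) = v
        · have h0 : e v ↑pp = 0 := hnoe _ hp
          rw [hsym] at h0
          rw [hrv] at hadjm
          omega
        · have hr2 : ξ ↑rr = ξ w₀ := by
            rcases htv ↑rr hrv with h | h
            · exact absurd ((hmR _).mpr ⟨hrv, h⟩) hrR
            · exact h
          have hpξ : ξ ↑pp = ξ u₀ := ((hmR _).mp hp).2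
          have hpv : (↑pp : V) ≠ v := ((hmR _).mp hp).1
          have hcr := hcross ↑pp ↑rr hpv hrv hpξ hr2 hadjm.2
          exact (hnec w₀ rr) hcr.2
    obtain ⟨w⟩ := (h2conn w₀).preconnected ⟨u₀, hmemc w₀ u₀ hu₀w₀⟩
      ⟨v, hmemc w₀ v (Ne.symm hw₀v)⟩
    exact hlem _ _ w hu₀R rfl
  -- v is adjacent to S
  have hvS : ∃ s, s ∈ S ∧ 0 < e v s := by
    by_contra hno
    push_neg at hno
    have hnoe : ∀ r, r ∈ S → e v r = 0 := fun r hr => Nat.le_zero.mp (hno r hr)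
    have hlem : ∀ (p q : ((({u₀}ᶜ : Finset V) : Finset V) : Set V))
        (w : (SimpleGraph.induce ((({u₀}ᶜ : Finset V) : Finset V) : Set V) (mgraph e)).Walk p q),
        (↑p : V) ∈ S → (↑q : V) = v → False := by
      intro p q w
      induction w with
      | nil =>
        intro hp hq
        exact ((hmS _).mp hp).1 hq
      | @cons pp rr qq hadj wt ih =>
        intro hp hq
        have hadjm : (mgraph e).Adj ↑pp ↑rr := hadj
        rw [mgraph_adj_iff e hsym] at hadjm
        by_cases hrS : (↑rr : V) ∈ S
        · exact ih hrS hq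
        by_cases hrv : (↑rr : V) = v
        · have h0 : e v ↑pp = 0 := hnoe _ hp
          rw [hsym] at h0
          rw [hrv] at hadjm
          omega
        · have hr2 : ξ ↑rr = ξ u₀ := by
            rcases htv ↑rr hrv with h | h
            · exact h
            · exact absurd ((hmS _).mpr ⟨hrv, h⟩) hrS
          have hpξ : ξ ↑pp = ξ w₀ := ((hmS _).mp hp).2
          have hpv : (↑pp : V) ≠ v := ((hmS _).mp hp).1
          have hcr := hcross ↑rr ↑pp hrv hpv hr2 hpξ (by rw [hsym]; exact hadjm.2)
          exact (hnec u₀ rr) hcr.1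
    obtain ⟨w⟩ := (h2conn u₀).preconnected ⟨w₀, hmemc u₀ w₀ (Ne.symm hu₀w₀)⟩
      ⟨v, hmemc u₀ v (Ne.symm hu₀v)⟩
    exact hlem _ _ w hw₀S rfl
  -- value at v
  have hξv : ξ v = ξ u₀ := by
    obtain ⟨r, hrR, hre⟩ := hvR
    obtain ⟨s, hsS, hse⟩ := hvS
    have h1 := hvedge r ((hmR r).mp hrR).1 hre
    have h2 := hvedge s ((hmS s).mp hsS).1 hse
    have h3 : ξ r = ξ u₀ := ((hmR r).mp hrR).2
    have h4 : ξ s = ξ w₀ := ((hmS s).mp hsS).2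
    omega
  -- quotient identities
  have hmk1 : glmk ξ = glmk (indFn (R ∪ {v})) := by
    apply glmk_eq_of_const _ _ (ξ w₀)
    intro u
    by_cases huv : u = v
    · have h2 : indFn (R ∪ {v}) v = 1 := by simp [indFn, Finset.mem_union]
      simp only [huv, h2]
      omega
    · rcases htv u huv with h | h
      · have hu : u ∈ R ∪ {v} := Finset.mem_union_left _ ((hmR u).mpr ⟨huv, h⟩)
        simp only [indFn, hu, if_pos]
        omega
      · have hu : u ∉ R ∪ {v} := by
          rw [Finset.mem_union, Finset.mem_singleton]
          rintro (hu | hu)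
          · have := ((hmR u).mp hu).2; omega
          · exact huv hu
        simp only [indFn, hu, if_neg, not_false_iff]
        omega
  have hmk2 : glmk (fun u => indFn {v} u - ξ u) = glmk (indFn (S ∪ {v})) := by
    apply glmk_eq_of_const _ _ (-ξ u₀)
    intro u
    by_cases huv : u = v
    · have h1 : indFn {v} v = 1 := by simp [indFn]
      have h2 : indFn (S ∪ {v}) v = 1 := by simp [indFn, Finset.mem_union]
      simp only [huv, h1, h2]
      omega
    · have huv' : u ∉ ({v} : Finset V) := by simpa using huv
      rcases htv u huv with h | h
      · have hu : u ∉ S ∪ {v} := by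
          rw [Finset.mem_union, Finset.mem_singleton]
          rintro (hu | hu)
          · have := ((hmS u).mp hu).2; omega
          · exact huv hu
        simp only [indFn, hu, if_neg, not_false_iff, huv']
        omega
      · have hu : u ∈ S ∪ {v} := Finset.mem_union_left _ ((hmS u).mpr ⟨huv, h⟩)
        simp only [indFn, hu, if_pos, huv', if_neg, not_false_iff]
        omega
  -- the edge count
  have hsum1 : (∑ u ∈ R, ∑ w ∈ S, e u w) = 1 := by
    have hinner : ∀ u ∈ R, (∑ w ∈ S, e u w) = if u = u₀ then 1 else 0 := by
      intro u hu
      by_cases h : u = u₀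
      · subst h
        rw [if_pos rfl, Finset.sum_eq_single_of_mem w₀ hw₀S, he1]
        intro w hw hwne
        by_contra hne0
        have hpos : 0 < e u w := Nat.pos_of_ne_zero hne0
        exact hwne (hcross u w ((hmR u).mp hu).1 ((hmS w).mp hw).1
          ((hmR u).mp hu).2 ((hmS w).mp hw).2 hpos).2
      · rw [if_neg h]
        apply Finset.sum_eq_zero
        intro w hw
        by_contra hne0
        have hpos : 0 < e u w := Nat.pos_of_ne_zero hne0
        exact h (hcross u w ((hmR u).mp hu).1 ((hmS w).mp hw).1
          ((hmR u).mp hu).2 ((hmS w).mp hw).2 hpos).1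
    rw [Finset.sum_congr rfl hinner, Finset.sum_ite_eq' R u₀ (fun _ => 1), if_pos hu₀R]
  -- Bform facts for ξ
  have hcast1 : ((e u₀ w₀ : ℕ) : ℤ) = 1 := by exact_mod_cast he1
  have hBx0 : Bform e ξ (indFn {u₀}) = 1 := by
    rw [bform_single e hsym hloop]
    rw [Finset.sum_eq_single_of_mem w₀ (Finset.mem_univ w₀)]
    · rw [hcast1]; omega
    · intro w _ hw
      by_cases hev : e u₀ w = 0
      · simp [hev]
      have hpos : 0 < e u₀ w := Nat.pos_of_ne_zero hev
      by_cases hwv : w = v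
      · subst hwv; rw [hξv]; ring
      · rcases htv w hwv with h | h
        · rw [h]; ring
        · exact absurd (hcross u₀ w hu₀v hwv rfl h hpos).2 hw
  have hBxR0 : ∀ u : V, u ≠ v → ξ u = ξ u₀ → u ≠ u₀ → Bform e ξ (indFn {u}) = 0 := by
    intro u huv hξu hne
    rw [bform_single e hsym hloop]
    apply Finset.sum_eq_zero
    intro w _
    by_cases hev : e u w = 0
    · simp [hev]
    have hpos : 0 < e u w := Nat.pos_of_ne_zero hev
    by_cases hwv : w = v
    · subst hwv; rw [hξu, hξv]; ring
    · rcases htv w hwv with h | h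
      · rw [hξu, h]; ring
      · exact absurd (hcross u w huv hwv hξu h hpos).1 hne
  have hBxS : ∀ u : V, u ≠ v → ξ u = ξ w₀ → Bform e ξ (indFn {u}) ≤ 0 := by
    intro u huv hξu
    rw [bform_single e hsym hloop]
    apply Finset.sum_nonpos
    intro w _
    have hnn : (0 : ℤ) ≤ (e u w : ℤ) := Int.ofNat_nonneg _
    have hval : ξ u - ξ w ≤ 0 := by
      by_cases hwv : w = v
      · subst hwv; omega
      · rcases htv w hwv with h | h <;> omega
    exact mul_nonpos_of_nonneg_of_nonpos hnn hval
  -- Bform facts for δ_v - ξ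
  have hBy0 : Bform e (fun u => indFn {v} u - ξ u) (indFn {w₀}) = 1 := by
    rw [bform_single e hsym hloop]
    rw [Finset.sum_eq_single_of_mem u₀ (Finset.mem_univ u₀)]
    · have hc2 : ((e w₀ u₀ : ℕ) : ℤ) = 1 := by rw [hsym w₀ u₀]; exact hcast1
      rw [hc2, one_mul]
      simp [indFn, hw₀v, hu₀v]
      omega
    · intro w _ hw
      by_cases hev : e w₀ w = 0
      · simp [hev]
      have hpos : 0 < e w₀ w := Nat.pos_of_ne_zero hev
      by_cases hwv : w = v
      · apply mul_eq_zero_of_right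
        simp [indFn, hw₀v, hwv]
        omega
      · rcases htv w hwv with h | h
        · exact absurd (hcross w w₀ hwv hw₀v h rfl (by rw [hsym]; exact hpos)).1 hw
        · apply mul_eq_zero_of_right
          simp [indFn, hw₀v, hwv]
          omega
  have hByS0 : ∀ u : V, u ≠ v → ξ u = ξ w₀ → u ≠ w₀ →
      Bform e (fun u => indFn {v} u - ξ u) (indFn {u}) = 0 := by
    intro u huv hξu hne
    rw [bform_single e hsym hloop]
    apply Finset.sum_eq_zero
    intro w _
    by_cases hev : e u w = 0
    · simp [hev]
    have hpos : 0 < e u w := Nat.pos_of_ne_zero hev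
    by_cases hwv : w = v
    · apply mul_eq_zero_of_right
      simp [indFn, huv, hwv]
      omega
    · rcases htv w hwv with h | h
      · exact absurd (hcross w u hwv huv h hξu (by rw [hsym]; exact hpos)).2 hne
      · apply mul_eq_zero_of_right
        simp [indFn, huv, hwv]
        omega
  have hByR : ∀ u : V, u ≠ v → ξ u = ξ u₀ →
      Bform e (fun u => indFn {v} u - ξ u) (indFn {u}) ≤ 0 := by
    intro u huv hξu
    rw [bform_single e hsym hloop]
    apply Finset.sum_nonpos
    intro w _
    have hnn : (0 : ℤ) ≤ (e u w : ℤ) := Int.ofNat_nonneg _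
    have hval : (indFn {v} u - ξ u) - (indFn {v} w - ξ w) ≤ 0 := by
      by_cases hwv : w = v
      · simp [indFn, huv, hwv]
        omega
      · have hw2 : ξ w ≤ ξ u₀ := by rcases htv w hwv with h | h <;> omega
        simp [indFn, huv, hwv]
        omega
    exact mul_nonpos_of_nonneg_of_nonpos hnn hval
  -- assemble
  refine ⟨R, S, ?_, ?_, hconnR, hconnS, hsum1, hmk1, hmk2, hBx0, ?_, ?_, hBy0, ?_, ?_⟩
  · ext u
    simp only [Finset.mem_union, Finset.mem_compl, Finset.mem_singleton, hmR, hmS]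
    constructor
    · rintro (⟨h, _⟩ | ⟨h, _⟩) <;> exact h
    · intro h
      rcases htv u h with h' | h'
      · exact Or.inl ⟨h, h'⟩
      · exact Or.inr ⟨h, h'⟩
  · ext u
    simp only [Finset.mem_inter, Finset.notMem_empty, iff_false, hmR, hmS]
    rintro ⟨⟨_, h1⟩, ⟨_, h2⟩⟩
    omega
  · intro u huv h1
    rcases htv u huv with h | h
    · by_contra hne
      rw [hBxR0 u huv h hne] at h1
      omega
    · have := hBxS u huv h
      omega
  · intro u huv hne
    rcases htv u huv with h | h
    · rw [hBxR0 u huv h hne]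
    · exact hBxS u huv h
  · intro u huv h1
    rcases htv u huv with h | h
    · have := hByR u huv h
      omega
    · by_contra hne
      rw [hByS0 u huv h hne] at h1
      omega
  · intro u huv hne
    rcases htv u huv with h | h
    · exact hByR u huv h
    · rw [hByS0 u huv h hne]

end core

/-- Let `G` be a 2-connected multigraph, `v ∈ V`, and suppose `[{v}] = x + y` in `Λ(G)`
with `x·y = −1`. Then `V∖{v}` is partitioned into nonempty sets `R` and `S`, each
inducing a connected subgraph, with exactly one edge of `G` between `R` and `S`, such
that `{x, y} = {[R ∪ {v}], [S ∪ {v}]}`. Furthermore there are unique vertices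
`u₁, u₂ ≠ v` with `x·[{u₁}] = 1` and `y·[{u₂}] = 1`, and every vertex
`w ∉ {v, u₁, u₂}` satisfies `x·[{w}] ≤ 0` and `y·[{w}] ≤ 0`. -/
theorem stmt13 {V : Type*} [Fintype V] [DecidableEq V] (e : V → V → ℕ)
    (hsym : ∀ u v, e u v = e v u) (hloop : ∀ v, e v v = 0)
    (hconn : (mgraph e).Connected)
    (h2conn : ∀ v : V, (SimpleGraph.induce (({v}ᶜ : Finset V) : Set V) (mgraph e)).Connected)
    (v : V) (x y : GLat V)
    (hsum : glmk (indFn {v}) = x + y)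
    (hxy : qform e x y = -1) :
    (∃ R S : Finset V,
      R ∪ S = {v}ᶜ ∧ R ∩ S = ∅ ∧
      (SimpleGraph.induce (↑R : Set V) (mgraph e)).Connected ∧
      (SimpleGraph.induce (↑S : Set V) (mgraph e)).Connected ∧
      (∑ u ∈ R, ∑ w ∈ S, e u w) = 1 ∧
      ({x, y} : Set (GLat V)) = {glmk (indFn (R ∪ {v})), glmk (indFn (S ∪ {v}))}) ∧
    (∃ u₁ u₂ : V, u₁ ≠ v ∧ u₂ ≠ v ∧
      qform e x (glmk (indFn {u₁})) = 1 ∧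
      qform e y (glmk (indFn {u₂})) = 1 ∧
      (∀ u : V, u ≠ v → qform e x (glmk (indFn {u})) = 1 → u = u₁) ∧
      (∀ u : V, u ≠ v → qform e y (glmk (indFn {u})) = 1 → u = u₂) ∧
      (∀ w : V, w ≠ v → w ≠ u₁ → w ≠ u₂ →
        qform e x (glmk (indFn {w})) ≤ 0 ∧ qform e y (glmk (indFn {w})) ≤ 0)) := by
  classical
  set ξ : V → ℤ := Quotient.out x with hξdef
  have hx : glmk ξ = x := Quotient.out_eq x
  have hy : glmk (fun u => indFn {v} u - ξ u) = y := by
    rw [glmk_sub, hsum, hx, add_sub_cancel_left]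
  have hB : Bform e ξ (fun u => indFn {v} u - ξ u) = -1 := by
    rw [← qform_mk e ξ (fun u => indFn {v} u - ξ u), hx, hy]
    exact hxy
  have hvind : ∀ u : V, indFn ({v} : Finset V) u = if u = v then 1 else 0 := by
    intro u; simp [indFn]
  have hres : ∀ p q : V, (e p q : ℤ) * (ξ p - ξ q) *
      ((indFn {v} p - ξ p) - (indFn {v} q - ξ q))
      = (e p q : ℤ) * (ξ p - ξ q) * ((indFn {v} p - indFn {v} q) - (ξ p - ξ q)) := by
    intro p q; ring
  have hcval : ∀ p q : V, indFn ({v} : Finset V) p - indFn {v} q = -1 ∨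
      indFn ({v} : Finset V) p - indFn {v} q = 0 ∨
      indFn ({v} : Finset V) p - indFn {v} q = 1 := by
    intro p q
    rw [hvind, hvind]
    split_ifs <;> omega
  have hle : ∀ p q : V, (e p q : ℤ) * (ξ p - ξ q) *
      ((indFn {v} p - ξ p) - (indFn {v} q - ξ q)) ≤ 0 := by
    intro p q
    rw [hres]
    exact tri_nonpos _ _ _ (Int.ofNat_nonneg _) (hcval p q)
  have hsymm : ∀ p q : V, (e p q : ℤ) * (ξ p - ξ q) *
      ((indFn {v} p - ξ p) - (indFn {v} q - ξ q))
      = (e q p : ℤ) * (ξ q - ξ p) * ((indFn {v} q - ξ q) - (indFn {v} p - ξ p)) := by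
    intro p q
    have hc : ((e p q : ℕ) : ℤ) = ((e q p : ℕ) : ℤ) := by exact_mod_cast hsym p q
    rw [hc]; ring
  have hdiag : ∀ p : V, (e p p : ℤ) * (ξ p - ξ p) *
      ((indFn {v} p - ξ p) - (indFn {v} p - ξ p)) = 0 := by
    intro p; ring
  have hnumbd : -2 ≤ (∑ p, ∑ q, (e p q : ℤ) * (ξ p - ξ q) *
      ((indFn {v} p - ξ p) - (indFn {v} q - ξ q))) ∧
      (∑ p, ∑ q, (e p q : ℤ) * (ξ p - ξ q) *
      ((indFn {v} p - ξ p) - (indFn {v} q - ξ q))) ≤ -1 := by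
    have hdef : Bform e ξ (fun u => indFn {v} u - ξ u)
        = (∑ p, ∑ q, (e p q : ℤ) * (ξ p - ξ q) *
           ((indFn {v} p - ξ p) - (indFn {v} q - ξ q))) / 2 := rfl
    rw [hdef] at hB
    omega
  obtain ⟨u₀, w₀, hne, ht0, hzero⟩ := sum_extract
    (fun p q => (e p q : ℤ) * (ξ p - ξ q) * ((indFn {v} p - ξ p) - (indFn {v} q - ξ q)))
    hle hsymm hdiag hnumbd
  obtain ⟨hE1, hc0, hd⟩ := tri_neg_one ((e u₀ w₀ : ℕ) : ℤ)
    (indFn {v} u₀ - indFn {v} w₀) (ξ u₀ - ξ w₀) (Int.ofNat_nonneg _) (hcval u₀ w₀)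
    (by rw [← hres u₀ w₀]; exact ht0)
  have he1 : e u₀ w₀ = 1 := by exact_mod_cast hE1
  have hu₀v : u₀ ≠ v := by
    intro h
    have hw₀v' : w₀ ≠ v := by rw [← h]; exact hne.symm
    rw [hvind, hvind, if_pos h, if_neg hw₀v'] at hc0
    omega
  have hw₀v : w₀ ≠ v := by
    intro h
    have hu₀v' : u₀ ≠ v := by rw [← h]; exact hne
    rw [hvind, hvind, if_pos h, if_neg hu₀v'] at hc0
    omega
  have hother : ∀ u w : V, u ≠ v → w ≠ v → ¬(u = u₀ ∧ w = w₀) → ¬(u = w₀ ∧ w = u₀) →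
      0 < e u w → ξ u = ξ w := by
    intro u w h1 h2 h3 h4 hpos
    by_cases huw : u = w
    · rw [huw]
    have hz := hzero u w h3 h4
    rw [hres u w] at hz
    have hc : indFn ({v} : Finset V) u - indFn {v} w = 0 := by
      rw [hvind, hvind, if_neg h1, if_neg h2]
      omega
    rw [hc] at hz
    have hEne : ((e u w : ℕ) : ℤ) ≠ 0 := by
      exact_mod_cast Nat.pos_iff_ne_zero.mp hpos
    rcases mul_eq_zero.mp hz with h | h
    · rcases mul_eq_zero.mp h with h' | h'
      · exact absurd h' hEne
      · omega
    · omega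
  have hvedge : ∀ w : V, w ≠ v → 0 < e v w → ξ w = ξ v ∨ ξ w = ξ v - 1 := by
    intro w hw hpos
    have h3 : ¬(v = u₀ ∧ w = w₀) := fun h => hu₀v h.1.symm
    have h4 : ¬(v = w₀ ∧ w = u₀) := fun h => hw₀v h.1.symm
    have hz := hzero v w h3 h4
    rw [hres v w] at hz
    have hc : indFn ({v} : Finset V) v - indFn {v} w = 1 := by
      rw [hvind, hvind, if_pos rfl, if_neg hw]
      omega
    rw [hc] at hz
    have hEne : ((e v w : ℕ) : ℤ) ≠ 0 := by
      exact_mod_cast Nat.pos_iff_ne_zero.mp hpos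
    rcases mul_eq_zero.mp hz with h | h
    · rcases mul_eq_zero.mp h with h' | h'
      · exact absurd h' hEne
      · omega
    · omega
  rcases hd with hd1 | hd1
  · -- ξ u₀ = ξ w₀ + 1 : apply core directly to ξ
    have hstep : ξ u₀ = ξ w₀ + 1 := by omega
    obtain ⟨R, S, hRS, hRSi, hcR, hcS, hsum1, hm1, hm2, hb1, hb2, hb3, hb4, hb5, hb6⟩ :=
      core e hsym hloop h2conn v ξ u₀ w₀ hu₀v hw₀v hne he1 hstep hother hvedge
    constructor
    · exact ⟨R, S, hRS, hRSi, hcR, hcS, hsum1, by rw [← hx, ← hy, hm1, hm2]⟩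
    · refine ⟨u₀, w₀, hu₀v, hw₀v, ?_, ?_, ?_, ?_, ?_⟩
      · rw [← hx, qform_mk]; exact hb1
      · rw [← hy, qform_mk]; exact hb4
      · intro u hu h; rw [← hx, qform_mk] at h; exact hb2 u hu h
      · intro u hu h; rw [← hy, qform_mk] at h; exact hb5 u hu h
      · intro w hwv hw1 hw2
        constructor
        · rw [← hx, qform_mk]; exact hb3 w hwv hw1
        · rw [← hy, qform_mk]; exact hb6 w hwv hw2
  · -- ξ u₀ = ξ w₀ - 1 : apply core to η = δ_v - ξ
    have hstep : (fun u => indFn {v} u - ξ u) u₀ = (fun u => indFn {v} u - ξ u) w₀ + 1 := by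
      simp only []
      rw [hvind, hvind, if_neg hu₀v, if_neg hw₀v]
      omega
    have hother' : ∀ u w : V, u ≠ v → w ≠ v → ¬(u = u₀ ∧ w = w₀) → ¬(u = w₀ ∧ w = u₀) →
        0 < e u w → (fun u => indFn {v} u - ξ u) u = (fun u => indFn {v} u - ξ u) w := by
      intro u w h1 h2 h3 h4 hpos
      simp only []
      rw [hvind, hvind, if_neg h1, if_neg h2]
      have := hother u w h1 h2 h3 h4 hpos
      omega
    have hvedge' : ∀ w : V, w ≠ v → 0 < e v w →
        (fun u => indFn {v} u - ξ u) w = (fun u => indFn {v} u - ξ u) v ∨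
        (fun u => indFn {v} u - ξ u) w = (fun u => indFn {v} u - ξ u) v - 1 := by
      intro w hw hpos
      simp only []
      rw [hvind, hvind, if_neg hw, if_pos rfl]
      have := hvedge w hw hpos
      omega
    obtain ⟨R, S, hRS, hRSi, hcR, hcS, hsum1, hm1, hm2, hb1, hb2, hb3, hb4, hb5, hb6⟩ :=
      core e hsym hloop h2conn v (fun u => indFn {v} u - ξ u) u₀ w₀ hu₀v hw₀v hne he1
        hstep hother' hvedge'
    have hη2 : (fun u => indFn {v} u - (fun u' => indFn {v} u' - ξ u') u) = ξ := by
      funext u; simp only []; ring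
    rw [hη2] at hm2 hb4 hb5 hb6
    constructor
    · refine ⟨S, R, ?_, ?_, hcS, hcR, ?_, ?_⟩
      · rw [Finset.union_comm]; exact hRS
      · rw [Finset.inter_comm]; exact hRSi
      · have hswap : (∑ u ∈ S, ∑ w ∈ R, e u w) = ∑ u ∈ R, ∑ w ∈ S, e u w := by
          rw [Finset.sum_comm]
          exact Finset.sum_congr rfl fun u _ => Finset.sum_congr rfl fun w _ => hsym w u
        rw [hswap]; exact hsum1
      · rw [← hx, ← hy, hm1, hm2]
    · refine ⟨w₀, u₀, hw₀v, hu₀v, ?_, ?_, ?_, ?_, ?_⟩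
      · rw [← hx, qform_mk]; exact hb4
      · rw [← hy, qform_mk]; exact hb1
      · intro u hu h; rw [← hx, qform_mk] at h; exact hb5 u hu h
      · intro u hu h; rw [← hy, qform_mk] at h; exact hb2 u hu h
      · intro w hwv hw1 hw2
        constructor
        · rw [← hx, qform_mk]; exact hb6 w hwv hw1
        · rw [← hy, qform_mk]; exact hb3 w hwv hw2
end

section
/- If L is decomposable, then σ_m = m − 1. -/
/-- The standard inner product on `ℤ^ι`. -/
def dotI {ι : Type*} [Fintype ι] (x y : ι → ℤ) : ℤ := ∑ i, x i * y i

/-- Pairing against a fixed vector `y`, as a linear map `ℤ^ι → ℤ`. -/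
def dotMap {ι : Type*} [Fintype ι] (y : ι → ℤ) : (ι → ℤ) →ₗ[ℤ] ℤ where
  toFun x := ∑ i, x i * y i
  map_add' a b := by simp [add_mul, Finset.sum_add_distrib]
  map_smul' c a := by simp [Finset.mul_sum, mul_assoc]

/-- `v_0, …, v_d` is an obtuse superbase for a sublattice `M` of `ℤ^ι` (of rank `d`)
if the family spans `M`, sums to zero, and has pairwise non-positive inner products. -/
def ObtuseSuperbase {ι : Type*} [Fintype ι] (M : Submodule ℤ (ι → ℤ)) (d : ℕ)
    (v : Fin (d + 1) → ι → ℤ) : Prop :=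
  Submodule.span ℤ (Set.range v) = M ∧ (∑ i, v i) = 0 ∧
    ∀ i j, i ≠ j → dotI (v i) (v j) ≤ 0

/-- The changemaker condition for `(σ_1, …, σ_t)` (indexed here by `Fin t`, so `σ i`
corresponds to `σ_{i+1}` in 1-based notation): `0 ≤ σ_1 ≤ 1` and
`σ_{i−1} ≤ σ_i ≤ σ_1 + … + σ_{i−1} + 1` for `1 < i ≤ t`. -/
def ChangemakerZ {t : ℕ} (σ : Fin t → ℤ) : Prop :=
  (∀ i : Fin t, (i : ℕ) = 0 → 0 ≤ σ i ∧ σ i ≤ 1) ∧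
  (∀ i j : Fin t, (j : ℕ) + 1 = (i : ℕ) →
    σ j ≤ σ i ∧ σ i ≤ (∑ k ∈ Finset.univ.filter (fun k : Fin t => (k : ℕ) < (i : ℕ)), σ k) + 1)

namespace CM15

open Finset

variable {t : ℕ} (σ : Fin t → ℤ)

/-- ℕ-indexed extension of σ. -/
def tau : ℕ → ℤ := fun j => if h : j < t then σ ⟨j, h⟩ else 1

/-- partial sums. -/
def Ssum (n : ℕ) : ℤ := ∑ j ∈ Finset.range n, tau σ j

/-- greedy subset-sum representation. -/
def Rg : ℕ → ℤ → Finset ℕ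
  | 0, _ => ∅
  | n+1, s => if tau σ n ≤ s then insert n (Rg n (s - tau σ n)) else Rg n s

/-- coefficients of standard basis vectors. -/
def cf (i : ℕ) : ℕ → ℤ := fun j =>
  if j = i then 1
  else if tau σ i = Ssum σ i + 1 then (if j = 0 then -2 else if j < i then -1 else 0)
  else if j ∈ Rg σ i (tau σ i) then -1 else 0

def Vv (i : ℕ) : Fin t → ℤ := fun j => cf σ i (j : ℕ)

section Basic

variable (hσ1 : ∀ i, 1 ≤ σ i) (hcm : ChangemakerZ σ)

lemma tau_fin (k : Fin t) : tau σ (k : ℕ) = σ k := by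
  simp [tau, Fin.is_lt]

lemma tau_pos (hσ1 : ∀ i, 1 ≤ σ i) (j : ℕ) : 1 ≤ tau σ j := by
  unfold tau; split
  · exact hσ1 _
  · exact le_refl _

lemma Ssum_nonneg (hσ1 : ∀ i, 1 ≤ σ i) (n : ℕ) : 0 ≤ Ssum σ n :=
  Finset.sum_nonneg fun j _ => le_trans zero_le_one (tau_pos σ hσ1 j)

lemma tau_zero (hσ1 : ∀ i, 1 ≤ σ i) (hcm : ChangemakerZ σ) (h : 0 < t) : tau σ 0 = 1 := by
  have h1 := (hcm.1 ⟨0, h⟩ rfl).2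
  have h2 := hσ1 ⟨0, h⟩
  have : tau σ 0 = σ ⟨0, h⟩ := by simp [tau, h]
  omega

lemma tau_mono (hcm : ChangemakerZ σ) {a b : ℕ} (hab : a ≤ b) (hb : b < t) :
    tau σ a ≤ tau σ b := by
  induction b with
  | zero => interval_cases a; exact le_refl _
  | succ n ih =>
    rcases Nat.lt_or_ge a (n+1) with h | h
    · have ha : a ≤ n := by omega
      have hn : n < t := by omega
      have step : tau σ n ≤ tau σ (n+1) := by
        have := (hcm.2 ⟨n+1, hb⟩ ⟨n, hn⟩ rfl).1
        rw [show tau σ n = σ ⟨n, hn⟩ from by simp [tau, hn],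
            show tau σ (n+1) = σ ⟨n+1, hb⟩ from by simp [tau, hb]]
        exact this
      exact le_trans (ih ha hn) step
    · have : a = n + 1 := by omega
      subst this; exact le_refl _

/-- conversion of the filtered sum in ChangemakerZ to Ssum. -/
lemma filter_sum_eq (i : ℕ) (hi : i < t) :
    (∑ k ∈ Finset.univ.filter (fun k : Fin t => (k : ℕ) < i), σ k) = Ssum σ i := by
  rw [Finset.sum_filter]
  have h1 : (∑ k : Fin t, if (k : ℕ) < i then σ k else 0)
      = ∑ j ∈ Finset.range t, (if j < i then tau σ j else 0) := by
    rw [← Fin.sum_univ_eq_sum_range (fun j => if j < i then tau σ j else 0) t]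
    exact Finset.sum_congr rfl fun k _ => by rw [tau_fin]
  rw [h1, ← Finset.sum_filter]
  have h2 : (Finset.range t).filter (· < i) = Finset.range i := by
    ext j; simp; omega
  rw [h2]; rfl

lemma tau_le_Ssum_add_one (hσ1 : ∀ i, 1 ≤ σ i) (hcm : ChangemakerZ σ) (i : ℕ) (hi : i < t) :
    tau σ i ≤ Ssum σ i + 1 := by
  rcases Nat.eq_zero_or_pos i with h | h
  · subst h
    have := (hcm.1 ⟨0, hi⟩ rfl).2
    have ht : tau σ 0 = σ ⟨0, hi⟩ := by simp [tau, hi]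
    have : tau σ 0 ≤ 1 := by omega
    have := Ssum_nonneg σ hσ1 0
    omega
  · have hi1 : i - 1 < t := by omega
    have := (hcm.2 ⟨i, hi⟩ ⟨i - 1, hi1⟩ (by simp; omega)).2
    rw [filter_sum_eq σ i hi] at this
    rw [show tau σ i = σ ⟨i, hi⟩ from by simp [tau, hi]]
    exact this

end Basic


section Greedy

lemma Rg_subset (n : ℕ) (s : ℤ) : Rg σ n s ⊆ Finset.range n := by
  induction n generalizing s with
  | zero => simp [Rg]
  | succ n ih =>
    unfold Rg; split
    · intro j hj
      rcases Finset.mem_insert.mp hj with h | h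
      · simp [h]
      · have := ih _ h; simp at this ⊢; omega
    · intro j hj; have := ih _ hj; simp at this ⊢; omega

lemma Rg_sum (hσ1 : ∀ i, 1 ≤ σ i) (hcm : ChangemakerZ σ) (n : ℕ) (hn : n ≤ t) (s : ℤ)
    (h0 : 0 ≤ s) (hs : s ≤ Ssum σ n) : ∑ j ∈ Rg σ n s, tau σ j = s := by
  induction n generalizing s with
  | zero =>
    simp [Rg]
    have : Ssum σ 0 = 0 := by simp [Ssum]
    omega
  | succ n ih =>
    have hSn : Ssum σ (n+1) = Ssum σ n + tau σ n := Finset.sum_range_succ _ _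
    unfold Rg; split
    · rename_i hle
      have hnot : n ∉ Rg σ n (s - tau σ n) := fun h => by
        have := Rg_subset σ n (s - tau σ n) h; simp at this
      rw [Finset.sum_insert hnot]
      have := ih (by omega) (s - tau σ n) (by omega) (by omega)
      omega
    · rename_i hle
      have htle := tau_le_Ssum_add_one σ hσ1 hcm n (by omega)
      exact ih (by omega) s h0 (by omega)

lemma Rg_nonneg_zero (n : ℕ) (hσ1 : ∀ i, 1 ≤ σ i) : Rg σ n 0 = ∅ := by
  induction n with
  | zero => simp [Rg]
  | succ n ih =>
    unfold Rg; split
    · rename_i h; have := tau_pos σ hσ1 n; omega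
    · exact ih

lemma Rg_ones (hσ1 : ∀ i, 1 ≤ σ i) (n : ℕ) (hones : ∀ j < n, tau σ j = 1) (s : ℤ)
    (h0 : 0 ≤ s) (hs : s ≤ n) : Rg σ n s = Finset.Ico (n - s.toNat) n := by
  induction n generalizing s with
  | zero =>
    have : s = 0 := by omega
    simp [Rg, this]
  | succ n ih =>
    have h1 : tau σ n = 1 := hones n (by omega)
    unfold Rg
    rcases le_or_gt 1 s with h | h
    · rw [if_pos (by omega)]
      rw [ih (fun j hj => hones j (by omega)) (s - tau σ n) (by omega) (by omega)]
      have hts : s.toNat ≤ n + 1 := by omega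
      have : (s - tau σ n).toNat = s.toNat - 1 := by omega
      rw [this]
      ext j
      simp [Finset.mem_Ico, Finset.mem_insert]
      omega
    · have : s = 0 := by omega
      subst this
      rw [if_neg (by omega), Rg_nonneg_zero σ n hσ1]
      simp

lemma Rg_inter (hσ1 : ∀ i, 1 ≤ σ i) (hcm : ChangemakerZ σ) (M n : ℕ)
    (hones : ∀ j < M, tau σ j = 1) (hMn : M ≤ n) (hn : n ≤ t) (s : ℤ)
    (h0 : 0 ≤ s) (hs : s ≤ Ssum σ n) :
    ∃ r : ℕ, r ≤ M ∧ Rg σ n s ∩ Finset.range M = Finset.Ico (M - r) M := by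
  induction n generalizing s with
  | zero =>
    refine ⟨0, by omega, ?_⟩
    have : M = 0 := by omega
    simp [Rg, this]
  | succ n ih =>
    have hSn : Ssum σ (n+1) = Ssum σ n + tau σ n := Finset.sum_range_succ _ _
    rcases Nat.lt_or_ge n M with hc | hc
    · -- n + 1 ≤ M, so M = n+1 and all ones up to n+1: direct
      have hM : M = n + 1 := by omega
      subst hM
      have hsn : s ≤ (n+1 : ℕ) := by
        have : Ssum σ (n+1) = (n+1 : ℕ) := by
          have : ∀ k ≤ n+1, Ssum σ k = (k:ℤ) := by
            intro k hk
            induction k with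
            | zero => simp [Ssum]
            | succ k ihk =>
              have : Ssum σ (k+1) = Ssum σ k + tau σ k := Finset.sum_range_succ _ _
              rw [this, ihk (by omega), hones k (by omega)]
              push_cast; ring
          exact this (n+1) (le_refl _)
        omega
      refine ⟨s.toNat, by omega, ?_⟩
      rw [Rg_ones σ hσ1 (n+1) hones s h0 (by exact_mod_cast hsn)]
      rw [Finset.inter_eq_left.mpr (by intro j hj; simp at hj ⊢; omega)]
    · -- n ≥ M
      unfold Rg; split
      · rename_i hle
        obtain ⟨r, hr, heq⟩ := ih hc (by omega) (s - tau σ n) (by omega) (by omega)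
        refine ⟨r, hr, ?_⟩
        rw [Finset.insert_inter_of_notMem (by simp; omega)]
        exact heq
      · rename_i hle
        have htle := tau_le_Ssum_add_one σ hσ1 hcm n (by omega)
        exact ih hc (by omega) s h0 (by omega)

lemma Rg_nonempty (hσ1 : ∀ i, 1 ≤ σ i) (hcm : ChangemakerZ σ) (n : ℕ) (hn : n ≤ t) (s : ℤ)
    (h0 : 1 ≤ s) (hs : s ≤ Ssum σ n) : (Rg σ n s).Nonempty := by
  rcases Finset.eq_empty_or_nonempty (Rg σ n s) with h | h
  · exfalso
    have := Rg_sum σ hσ1 hcm n hn s (by omega) hs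
    rw [h] at this; simp at this; omega
  · exact h

end Greedy


section CF

lemma dotMap_apply (x : Fin t → ℤ) : dotMap σ x = ∑ i, x i * σ i := rfl

lemma cf_self (i : ℕ) : cf σ i i = 1 := by simp [cf]


lemma cf_self' {i j : ℕ} (h : j = i) : cf σ i j = 1 := by subst h; simp [cf]

lemma cf_supp {i j : ℕ} (h : i < j) : cf σ i j = 0 := by
  unfold cf
  rw [if_neg (by omega)]
  split
  · rw [if_neg (by omega), if_neg (by omega)]
  · rw [if_neg]
    intro hmem
    have := Rg_subset σ i (tau σ i) hmem
    simp at this; omega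

lemma cf_nonpos {i j : ℕ} (h : j ≠ i) : cf σ i j ≤ 0 := by
  unfold cf
  rw [if_neg h]
  split
  · split
    · norm_num
    · split <;> norm_num
  · split <;> norm_num

lemma cf_ge_neg_one {i j : ℕ} (h : ¬ (tau σ i = Ssum σ i + 1 ∧ j = 0)) :
    -1 ≤ cf σ i j := by
  unfold cf
  split
  · norm_num
  · split
    · rename_i h1 h2
      rw [if_neg (fun hj0 => h ⟨h2, hj0⟩)]
      split <;> norm_num
    · split <;> norm_num

lemma cf_tight_zero {i : ℕ} (h1 : 1 ≤ i) (htight : tau σ i = Ssum σ i + 1) :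
    cf σ i 0 = -2 := by
  unfold cf
  rw [if_neg (by omega), if_pos htight, if_pos rfl]

lemma cf_tight_mid {i j : ℕ} (h0 : j ≠ 0) (hj : j < i) (htight : tau σ i = Ssum σ i + 1) :
    cf σ i j = -1 := by
  unfold cf
  rw [if_neg (by omega), if_pos htight, if_neg h0, if_pos hj]

lemma cf_nontight {i j : ℕ} (hj : j ≠ i) (htight : ¬ tau σ i = Ssum σ i + 1) :
    cf σ i j = if j ∈ Rg σ i (tau σ i) then -1 else 0 := by
  unfold cf
  rw [if_neg hj, if_neg htight]

lemma cf_dot_tau (hσ1 : ∀ i, 1 ≤ σ i) (hcm : ChangemakerZ σ) (i : ℕ)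
    (h1 : 1 ≤ i) (hit : i < t) :
    ∑ j ∈ Finset.range t, cf σ i j * tau σ j = 0 := by
  have hsub : Finset.range (i+1) ⊆ Finset.range t := by
    intro j hj; simp at hj ⊢; omega
  rw [← Finset.sum_subset hsub (fun j hj hj2 => by
        have hij : i < j := by simp at hj hj2; omega
        rw [cf_supp σ hij, zero_mul])]
  rw [Finset.sum_range_succ, cf_self, one_mul]
  by_cases htight : tau σ i = Ssum σ i + 1
  · have hcongr : ∀ j ∈ Finset.range i, cf σ i j * tau σ j
        = -tau σ j + (if j = 0 then -tau σ j else 0) := by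
      intro j hj
      simp only [Finset.mem_range] at hj
      by_cases hj0 : j = 0
      · subst hj0
        rw [cf_tight_zero σ h1 htight, if_pos rfl]; ring
      · rw [cf_tight_mid σ hj0 hj htight, if_neg hj0]; ring
    rw [Finset.sum_congr rfl hcongr, Finset.sum_add_distrib]
    have e1 : ∑ j ∈ Finset.range i, -tau σ j = -Ssum σ i := by
      rw [Finset.sum_neg_distrib]; rfl
    have e2 : (∑ j ∈ Finset.range i, if j = 0 then -tau σ j else 0) = -tau σ 0 := by
      rw [Finset.sum_ite_eq' (Finset.range i) 0 (fun j => -tau σ j)]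
      rw [if_pos (by simp; omega)]
    rw [e1, e2, tau_zero σ hσ1 hcm (by omega)]
    omega
  · have hle : tau σ i ≤ Ssum σ i := by
      have := tau_le_Ssum_add_one σ hσ1 hcm i hit; omega
    have hcongr : ∀ j ∈ Finset.range i, cf σ i j * tau σ j
        = (if j ∈ Rg σ i (tau σ i) then -tau σ j else 0) := by
      intro j hj
      simp only [Finset.mem_range] at hj
      rw [cf_nontight σ (by omega) htight]
      split <;> ring
    rw [Finset.sum_congr rfl hcongr, Finset.sum_ite_mem,
        Finset.inter_eq_right.mpr (Rg_subset σ i (tau σ i)), Finset.sum_neg_distrib,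
        Rg_sum σ hσ1 hcm i (by omega) (tau σ i) (by have := tau_pos σ hσ1 i; omega) hle]
    ring

lemma Vv_dot_sigma (hσ1 : ∀ i, 1 ≤ σ i) (hcm : ChangemakerZ σ) (i : ℕ)
    (h1 : 1 ≤ i) (hit : i < t) :
    ∑ k : Fin t, Vv σ i k * σ k = 0 := by
  have h : ∑ k : Fin t, Vv σ i k * σ k = ∑ j ∈ Finset.range t, cf σ i j * tau σ j := by
    rw [← Fin.sum_univ_eq_sum_range (fun j => cf σ i j * tau σ j) t]
    exact Finset.sum_congr rfl fun k _ => by rw [tau_fin]; rfl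
  rw [h]
  exact cf_dot_tau σ hσ1 hcm i h1 hit

lemma Vv_mem_ker (hσ1 : ∀ i, 1 ≤ σ i) (hcm : ChangemakerZ σ) (i : ℕ)
    (h1 : 1 ≤ i) (hit : i < t) :
    Vv σ i ∈ LinearMap.ker (dotMap σ) := by
  rw [LinearMap.mem_ker, dotMap_apply]
  exact Vv_dot_sigma σ hσ1 hcm i h1 hit

end CF


section Span

def VSet : Set (Fin t → ℤ) := {w | ∃ i : ℕ, 1 ≤ i ∧ i < t ∧ w = Vv σ i}

def wv (i : ℕ) : Fin t → ℤ :=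
  fun k => (if (k : ℕ) = i then 1 else 0) - tau σ i * (if (k : ℕ) = 0 then 1 else 0)

lemma wv_zero (hσ1 : ∀ i, 1 ≤ σ i) (hcm : ChangemakerZ σ) (ht : 0 < t) :
    wv σ 0 = 0 := by
  funext k
  simp only [wv, tau_zero σ hσ1 hcm ht, Pi.zero_apply]
  ring

lemma wv_eq (hσ1 : ∀ i, 1 ≤ σ i) (hcm : ChangemakerZ σ) (i : ℕ) (h1 : 1 ≤ i) (hit : i < t) :
    wv σ i = Vv σ i + ∑ j ∈ (if tau σ i = Ssum σ i + 1 then Finset.range i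
      else Rg σ i (tau σ i)), wv σ j := by
  by_cases htight : tau σ i = Ssum σ i + 1
  · rw [if_pos htight]
    funext k
    rw [Pi.add_apply, Finset.sum_apply]
    simp only [wv, Vv, Finset.sum_sub_distrib, ← Finset.sum_mul]
    rw [Finset.sum_ite_eq (Finset.range i) ((k : ℕ)) (fun _ => (1:ℤ))]
    have hS : ∑ j ∈ Finset.range i, tau σ j = Ssum σ i := rfl
    rw [hS]
    simp only [cf, htight, if_true, Finset.mem_range]
    split_ifs <;> omega
  · rw [if_neg htight]
    funext k
    rw [Pi.add_apply, Finset.sum_apply]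
    simp only [wv, Vv, Finset.sum_sub_distrib, ← Finset.sum_mul]
    rw [Finset.sum_ite_eq (Rg σ i (tau σ i)) ((k : ℕ)) (fun _ => (1:ℤ))]
    rw [Rg_sum σ hσ1 hcm i (by omega) (tau σ i)
      (by have := tau_pos σ hσ1 i; omega)
      (by have := tau_le_Ssum_add_one σ hσ1 hcm i hit; omega)]
    simp only [cf, htight, if_false]
    by_cases hq : (k : ℕ) ∈ Rg σ i (tau σ i)
    · have hklt : (k : ℕ) < i := by
        have := Rg_subset σ i (tau σ i) hq; simpa using this
      simp only [hq, if_true]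
      split_ifs <;> omega
    · simp only [hq, if_false]
      split_ifs <;> omega

lemma wv_mem (hσ1 : ∀ i, 1 ≤ σ i) (hcm : ChangemakerZ σ) (i : ℕ) (hit : i < t) :
    wv σ i ∈ Submodule.span ℤ (VSet σ) := by
  induction i using Nat.strong_induction_on with
  | _ i IH =>
    rcases Nat.eq_zero_or_pos i with h0 | h0
    · subst h0
      rw [wv_zero σ hσ1 hcm (by omega)]
      exact Submodule.zero_mem _
    · rw [wv_eq σ hσ1 hcm i h0 hit]
      refine Submodule.add_mem _ (Submodule.subset_span ⟨i, h0, hit, rfl⟩)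
        (Submodule.sum_mem _ fun j hj => ?_)
      have hji : j < i := by
        by_cases htight : tau σ i = Ssum σ i + 1
        · rw [if_pos htight] at hj; simpa using hj
        · rw [if_neg htight] at hj
          have := Rg_subset σ i (tau σ i) hj; simpa using this
      exact IH j hji (by omega)

lemma ker_le_span (hσ1 : ∀ i, 1 ≤ σ i) (hcm : ChangemakerZ σ) (x : Fin t → ℤ)
    (hx : x ∈ LinearMap.ker (dotMap σ)) : x ∈ Submodule.span ℤ (VSet σ) := by
  have hker : ∑ i, x i * σ i = 0 := by
    rw [← dotMap_apply]; exact LinearMap.mem_ker.mp hx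
  have hrep : x = ∑ i : Fin t, x i • wv σ (i : ℕ) := by
    funext k
    rw [Finset.sum_apply]
    have hterm : ∀ i : Fin t, (x i • wv σ (i : ℕ)) k
        = (if k = i then x i else 0) - (x i * σ i) * (if (k : ℕ) = 0 then 1 else 0) := by
      intro i
      simp only [Pi.smul_apply, smul_eq_mul, wv, tau_fin]
      by_cases hki : k = i
      · subst hki
        by_cases h0 : (k : ℕ) = 0 <;> simp [h0] <;> ring
      · have hv : (k : ℕ) ≠ (i : ℕ) := fun h => hki (Fin.val_injective h)
        by_cases h0 : (k : ℕ) = 0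
        · have hv0 : ¬ ((0 : ℕ) = (i : ℕ)) := by omega
          simp [hki, hv, h0, hv0]
        · simp [hki, hv, h0]
    rw [Finset.sum_congr rfl (fun i _ => hterm i), Finset.sum_sub_distrib,
      Finset.sum_ite_eq Finset.univ k x, ← Finset.sum_mul, hker]
    simp
  rw [hrep]
  exact Submodule.sum_mem _ fun i _ => Submodule.smul_mem _ _ (wv_mem σ hσ1 hcm _ i.isLt)

end Span


section Irred

lemma prod_term_nonpos (a c : ℤ) (hc : c = 1 ∨ c = 0 ∨ c = -1) : a * (c - a) ≤ 0 := by
  rcases lt_trichotomy a 0 with h | h | h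
  · exact mul_nonpos_iff.mpr (Or.inr ⟨by omega, by omega⟩)
  · simp [h]
  · exact mul_nonpos_iff.mpr (Or.inl ⟨by omega, by omega⟩)

lemma zero_of_nonpos (hσ1 : ∀ i, 1 ≤ σ i) (z : Fin t → ℤ) (hz : ∀ k, z k ≤ 0)
    (h0 : ∑ k, z k * σ k = 0) : z = 0 := by
  have hterm : ∀ k ∈ Finset.univ, z k * σ k ≤ 0 := fun k _ =>
    mul_nonpos_iff.mpr (Or.inr ⟨hz k, by linarith [hσ1 k]⟩)
  have hall := (Finset.sum_eq_zero_iff_of_nonpos hterm).mp h0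
  funext k
  have h := hall k (Finset.mem_univ k)
  have hσ := hσ1 k
  rcases mul_eq_zero.mp h with h | h
  · exact h
  · omega

lemma dich (x y v : Fin t → ℤ) (hsum : ∀ k, x k + y k = v k)
    (hv : ∀ k, v k = 1 ∨ v k = 0 ∨ v k = -1) (hxy : ∑ k, x k * y k = 0) :
    ∀ k, x k = 0 ∨ x k = v k := by
  have hterm : ∀ k ∈ Finset.univ, x k * y k ≤ 0 := by
    intro k _
    have hyk : y k = v k - x k := by have := hsum k; omega
    rw [hyk]
    exact prod_term_nonpos _ _ (hv k)
  have hall := (Finset.sum_eq_zero_iff_of_nonpos hterm).mp hxy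
  intro k
  rcases mul_eq_zero.mp (hall k (Finset.mem_univ k)) with h | h
  · exact Or.inl h
  · right; have := hsum k; omega

lemma halfZ (hσ1 : ∀ i, 1 ≤ σ i) (I : Fin t) (v x : Fin t → ℤ)
    (pat : ∀ k, x k = 0 ∨ x k = v k) (hxI : x I = 0)
    (hvle : ∀ k, k ≠ I → v k ≤ 0) (hx : ∑ k, x k * σ k = 0) : x = 0 := by
  apply zero_of_nonpos σ hσ1 x _ hx
  intro k
  by_cases hkI : k = I
  · subst hkI; omega
  · rcases pat k with h | h
    · omega
    · rw [h]; exact hvle k hkI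

lemma finish_pat (hσ1 : ∀ i, 1 ≤ σ i) (I : Fin t) (v x y : Fin t → ℤ)
    (hsum : ∀ k, x k + y k = v k) (pat : ∀ k, x k = 0 ∨ x k = v k)
    (hvI : v I = 1) (hvle : ∀ k, k ≠ I → v k ≤ 0)
    (hx : ∑ k, x k * σ k = 0) (hy : ∑ k, y k * σ k = 0) : x = 0 ∨ y = 0 := by
  rcases pat I with h | h
  · exact Or.inl (halfZ σ hσ1 I v x pat h hvle hx)
  · right
    apply halfZ σ hσ1 I v y _ _ hvle hy
    · intro k
      rcases pat k with h' | h'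
      · right; have := hsum k; omega
      · left; have := hsum k; omega
    · have := hsum I; omega

lemma BB (hσ1 : ∀ i, 1 ≤ σ i) (O K I : Fin t) (hIO : I ≠ O) (hIK : I ≠ K)
    (hσIK : σ I ≤ σ K) (v x y : Fin t → ℤ) (hsum : ∀ k, x k + y k = v k)
    (hvI : v I = 1) (hvle : ∀ k, k ≠ I → v k ≤ 0) (hvO : v O = -2) (hvK : v K = 0)
    (hxO : x O = -1) (hxI : x I = 1) (hε : x K = 1 ∨ x K = -1)
    (pat : ∀ k, k ≠ O → k ≠ K → (x k = 0 ∨ x k = v k))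
    (hx : ∑ k, x k * σ k = 0) (hy : ∑ k, y k * σ k = 0) : False := by
  have hKO : K ≠ O := fun h => by rw [h, hvO] at hvK; omega
  have split : ∀ z : Fin t → ℤ,
      ∑ k, z k * σ k = (∑ k ∈ ((Finset.univ.erase O).erase K).erase I, z k * σ k)
        + z I * σ I + z K * σ K + z O * σ O := by
    intro z
    have e1 := Finset.sum_erase_add Finset.univ (fun k => z k * σ k) (Finset.mem_univ O)
    have e2 := Finset.sum_erase_add (Finset.univ.erase O) (fun k => z k * σ k)
      (Finset.mem_erase.mpr ⟨hKO, Finset.mem_univ K⟩)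
    have e3 := Finset.sum_erase_add ((Finset.univ.erase O).erase K) (fun k => z k * σ k)
      (Finset.mem_erase.mpr ⟨hIK, Finset.mem_erase.mpr ⟨hIO, Finset.mem_univ I⟩⟩)
    linarith [e1, e2, e3]
  have hmem : ∀ k ∈ ((Finset.univ.erase O).erase K).erase I, k ≠ I ∧ k ≠ K ∧ k ≠ O := by
    intro k hk
    rcases Finset.mem_erase.mp hk with ⟨h1, hk2⟩
    rcases Finset.mem_erase.mp hk2 with ⟨h2, hk3⟩
    exact ⟨h1, h2, (Finset.mem_erase.mp hk3).1⟩
  have hSx : (∑ k ∈ ((Finset.univ.erase O).erase K).erase I, x k * σ k) ≤ 0 := by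
    apply Finset.sum_nonpos
    intro k hk
    obtain ⟨h1, h2, h3⟩ := hmem k hk
    have hxk : x k ≤ 0 := by
      rcases pat k h3 h2 with h | h
      · omega
      · rw [h]; exact hvle k h1
    exact mul_nonpos_iff.mpr (Or.inr ⟨hxk, by linarith [hσ1 k]⟩)
  have hSy : (∑ k ∈ ((Finset.univ.erase O).erase K).erase I, y k * σ k) ≤ 0 := by
    apply Finset.sum_nonpos
    intro k hk
    obtain ⟨h1, h2, h3⟩ := hmem k hk
    have hyk : y k ≤ 0 := by
      rcases pat k h3 h2 with h | h
      · have := hsum k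
        have := hvle k h1
        omega
      · have := hsum k; omega
    exact mul_nonpos_iff.mpr (Or.inr ⟨hyk, by linarith [hσ1 k]⟩)
  have hyO : y O = -1 := by have := hsum O; omega
  have hyK : y K = - x K := by have := hsum K; omega
  have hyI : y I = 0 := by have := hsum I; omega
  have Ex := split x
  have Ey := split y
  rw [hx] at Ex
  rw [hy] at Ey
  rw [hyO, hyK, hyI] at Ey
  rw [hxO, hxI] at Ex
  rcases hε with h | h <;> rw [h] at Ex Ey <;>
    [linarith [hσ1 O, hσ1 K]; linarith [hσ1 O, hσ1 K]]

end Irred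


section IrrMain

lemma cf_vals_nontight (i : ℕ) (htight : ¬ tau σ i = Ssum σ i + 1) (j : ℕ) :
    cf σ i j = 1 ∨ cf σ i j = 0 ∨ cf σ i j = -1 := by
  by_cases hji : j = i
  · left; exact cf_self' σ hji
  · rw [cf_nontight σ hji htight]
    split
    · right; right; rfl
    · right; left; rfl

lemma cf_vals_tight (i : ℕ) (htight : tau σ i = Ssum σ i + 1) (j : ℕ) (hj0 : j ≠ 0) :
    cf σ i j = 1 ∨ cf σ i j = 0 ∨ cf σ i j = -1 := by
  by_cases hji : j = i
  · left; exact cf_self' σ hji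
  · by_cases hjlt : j < i
    · right; right; exact cf_tight_mid σ hj0 hjlt htight
    · right; left; exact cf_supp σ (by omega)

lemma irr (hσ1 : ∀ i, 1 ≤ σ i) (hcm : ChangemakerZ σ) (i : ℕ) (h1 : 1 ≤ i) (hit : i < t)
    (x y : Fin t → ℤ) (hsum : x + y = Vv σ i)
    (hx : ∑ k, x k * σ k = 0) (hy : ∑ k, y k * σ k = 0)
    (hxy : ∑ k, x k * y k = 0) : x = 0 ∨ y = 0 := by
  have hsum' : ∀ k, x k + y k = Vv σ i k := fun k => congrFun hsum k
  set I : Fin t := ⟨i, hit⟩ with hIdef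
  have hvI : Vv σ i I = 1 := cf_self' σ rfl
  have hvle : ∀ k, k ≠ I → Vv σ i k ≤ 0 := by
    intro k hk
    exact cf_nonpos σ (fun h => hk (Fin.ext h))
  by_cases htight : tau σ i = Ssum σ i + 1
  · -- tight case
    set O : Fin t := ⟨0, by omega⟩ with hOdef
    have hvO : Vv σ i O = -2 := cf_tight_zero σ h1 htight
    have hIO : I ≠ O := by
      intro h
      have : i = 0 := congrArg Fin.val h
      omega
    have hterm : ∀ k, k ≠ O → x k * y k ≤ 0 := by
      intro k hk
      have hk0 : (k : ℕ) ≠ 0 := fun h => hk (Fin.ext h)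
      have hyk : y k = Vv σ i k - x k := by have := hsum' k; omega
      rw [hyk]
      exact prod_term_nonpos _ _ (cf_vals_tight σ i htight (k : ℕ) hk0)
    by_cases hxO : x O = -1
    · -- branch B : contradiction
      exfalso
      have hyO : y O = -1 := by have := hsum' O; rw [hvO] at this; omega
      have hrest : ∑ k ∈ Finset.univ.erase O, x k * y k = -1 := by
        have e := Finset.sum_erase_add Finset.univ (fun k => x k * y k) (Finset.mem_univ O)
        rw [hxO, hyO] at e
        omega
      obtain ⟨K, hKmem, hKlt⟩ : ∃ K ∈ Finset.univ.erase O, x K * y K < 0 := by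
        apply Finset.exists_lt_of_sum_lt (f := fun k => x k * y k) (g := fun _ => (0:ℤ))
        rw [hrest]; simp
      have hKO : K ≠ O := (Finset.mem_erase.mp hKmem).1
      have e2 : ∑ k ∈ (Finset.univ.erase O).erase K, x k * y k = -1 - x K * y K := by
        have e := Finset.sum_erase_add (Finset.univ.erase O) (fun k => x k * y k) hKmem
        linarith [e, hrest]
      have e3 : ∑ k ∈ (Finset.univ.erase O).erase K, x k * y k ≤ 0 :=
        Finset.sum_nonpos fun k hk =>
          hterm k (Finset.mem_erase.mp (Finset.mem_erase.mp hk).2).1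
      have htK : x K * y K = -1 := by linarith [e2, e3, hKlt]
      have hz0 : ∑ k ∈ (Finset.univ.erase O).erase K, x k * y k = 0 := by
        rw [e2, htK]; ring
      have hrest0 : ∀ k, k ≠ O → k ≠ K → x k * y k = 0 := by
        have hz := (Finset.sum_eq_zero_iff_of_nonpos (fun k hk =>
          hterm k (Finset.mem_erase.mp (Finset.mem_erase.mp hk).2).1)).mp hz0
        intro k hkO hkK
        exact hz k (Finset.mem_erase.mpr ⟨hkK, Finset.mem_erase.mpr ⟨hkO, Finset.mem_univ k⟩⟩)
      have pat : ∀ k, k ≠ O → k ≠ K → (x k = 0 ∨ x k = Vv σ i k) := by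
        intro k hkO hkK
        rcases mul_eq_zero.mp (hrest0 k hkO hkK) with h | h
        · exact Or.inl h
        · right; have := hsum' k; omega
      have hε : x K = 1 ∨ x K = -1 := by
        have hu : IsUnit (x K) := IsUnit.of_mul_eq_one (a := x K) (-(y K)) (by linarith [htK])
        exact Int.isUnit_iff.mp hu
      have hyK : y K = - x K := by
        rcases hε with h | h <;> rw [h] at htK ⊢ <;> omega
      have hvK : Vv σ i K = 0 := by have := hsum' K; omega
      have hIK : I ≠ K := fun h => by rw [← h, hvI] at hvK; omega
      have hiK : i < (K : ℕ) := by
        rcases Nat.lt_trichotomy (K : ℕ) i with h | h | h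
        · exfalso
          have hk0 : (K : ℕ) ≠ 0 := fun h0 => hKO (Fin.ext h0)
          rw [show Vv σ i K = cf σ i (K : ℕ) from rfl,
            cf_tight_mid σ hk0 h htight] at hvK
          omega
        · exact absurd (Fin.ext h.symm : I = K) hIK
        · exact h
      have hσIK : σ I ≤ σ K := by
        have := tau_mono σ hcm (le_of_lt hiK) K.isLt
        rwa [show tau σ i = σ I from by simp [tau, hit, hIdef], tau_fin] at this
      rcases pat I hIO hIK with hxI | hxI
      · -- x I = 0, so y I = 1 : apply BB to (y, x)
        have hyI : y I = 1 := by have := hsum' I; omega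
        have hyO' : y O = -1 := hyO
        have hyε : y K = 1 ∨ y K = -1 := by rcases hε with h | h <;> rw [h] at hyK <;> omega
        have paty : ∀ k, k ≠ O → k ≠ K → (y k = 0 ∨ y k = Vv σ i k) := by
          intro k hkO hkK
          rcases pat k hkO hkK with h | h
          · right; have := hsum' k; omega
          · left; have := hsum' k; omega
        exact BB σ hσ1 O K I hIO hIK hσIK (Vv σ i) y x
          (fun k => by have := hsum' k; omega) hvI hvle hvO hvK hyO' hyI hyε paty hy hx
      · have hxI' : x I = 1 := by rw [hxI, hvI]
        exact BB σ hσ1 O K I hIO hIK hσIK (Vv σ i) x y hsum' hvI hvle hvO hvK hxO hxI' hε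
          pat hx hy
    · -- branch A : all terms ≤ 0
      have htO : x O * y O ≤ 0 := by
        have hyOv : y O = -2 - x O := by have := hsum' O; rw [hvO] at this; omega
        rw [hyOv]
        rcases lt_trichotomy (x O) 0 with h | h | h
        · have : x O ≤ -2 := by omega
          exact mul_nonpos_iff.mpr (Or.inr ⟨by omega, by omega⟩)
        · simp [h]
        · exact mul_nonpos_iff.mpr (Or.inl ⟨by omega, by omega⟩)
      have hall := (Finset.sum_eq_zero_iff_of_nonpos (fun k _ => by
        by_cases hk : k = O
        · subst hk; exact htO
        · exact hterm k hk)).mp hxy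
      have pat : ∀ k, x k = 0 ∨ x k = Vv σ i k := by
        intro k
        rcases mul_eq_zero.mp (hall k (Finset.mem_univ k)) with h | h
        · exact Or.inl h
        · right; have := hsum' k; omega
      exact finish_pat σ hσ1 I (Vv σ i) x y hsum' pat hvI hvle hx hy
  · -- non-tight case
    have hv : ∀ k, Vv σ i k = 1 ∨ Vv σ i k = 0 ∨ Vv σ i k = -1 :=
      fun k => cf_vals_nontight σ i htight (k : ℕ)
    exact finish_pat σ hσ1 I (Vv σ i) x y hsum' (dich x y (Vv σ i) hsum' hv hxy) hvI hvle hx hy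

end IrrMain


section Dots

lemma dotI_vv (i j : ℕ) :
    dotI (Vv σ i) (Vv σ j) = ∑ k ∈ Finset.range t, cf σ i k * cf σ j k := by
  unfold dotI
  rw [← Fin.sum_univ_eq_sum_range (fun k => cf σ i k * cf σ j k) t]
  rfl

lemma dot_min (i K : ℕ) (h1 : 1 ≤ i) (hit : i < t)
    (htight : ¬ tau σ i = Ssum σ i + 1)
    (hKmem : K ∈ Rg σ i (tau σ i)) (hKmin : ∀ j ∈ Rg σ i (tau σ i), K ≤ j) :
    ∑ k ∈ Finset.range t, cf σ i k * cf σ K k = -1 := by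
  have hKi : K < i := by have := Rg_subset σ i (tau σ i) hKmem; simpa using this
  rw [Finset.sum_eq_single_of_mem K (by simp; omega)]
  · rw [cf_self σ K, cf_nontight σ (by omega) htight, if_pos hKmem]; ring
  · intro j _ hjK
    rcases Nat.lt_or_ge j K with h | h
    · have : cf σ i j = 0 := by
        rw [cf_nontight σ (by omega) htight, if_neg (fun hmem => by
          have := hKmin j hmem; omega)]
      rw [this, zero_mul]
    · have : cf σ K j = 0 := cf_supp σ (by omega)
      rw [this, mul_zero]

lemma sum_cm (hσ1 : ∀ i, 1 ≤ σ i) (hcm : ChangemakerZ σ) (M : ℕ) (h1 : 1 ≤ M) (hMt : M < t)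
    (hones : ∀ j < M, tau σ j = 1) :
    ∑ j ∈ Finset.range M, cf σ M j = -tau σ M := by
  have h0 := cf_dot_tau σ hσ1 hcm M h1 hMt
  have hsub : Finset.range (M+1) ⊆ Finset.range t := by intro j hj; simp at hj ⊢; omega
  rw [← Finset.sum_subset hsub (fun j hj hj2 => by
    have hij : M < j := by simp at hj hj2; omega
    rw [cf_supp σ hij, zero_mul])] at h0
  rw [Finset.sum_range_succ, cf_self, one_mul] at h0
  have hc : ∀ j ∈ Finset.range M, cf σ M j * tau σ j = cf σ M j := by
    intro j hj; simp at hj; rw [hones j hj, mul_one]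
  rw [Finset.sum_congr rfl hc] at h0
  linarith [h0]

lemma dot_to_vm (hσ1 : ∀ i, 1 ≤ σ i) (hcm : ChangemakerZ σ) (M i : ℕ)
    (h1 : 1 ≤ M) (hMi : M < i) (hit : i < t) (hones : ∀ j < M, tau σ j = 1)
    (hlow : ∀ j, j < M → cf σ i j ≤ -1) :
    tau σ M - 1 ≤ ∑ k ∈ Finset.range t, cf σ i k * cf σ M k := by
  have hMt : M < t := by omega
  have hsub : Finset.range (M+1) ⊆ Finset.range t := by intro j hj; simp at hj ⊢; omega
  rw [← Finset.sum_subset hsub (fun j hj hj2 => by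
    have hij : M < j := by simp at hj hj2; omega
    rw [cf_supp σ hij, mul_zero])]
  rw [Finset.sum_range_succ, cf_self, mul_one]
  have hbound : ∑ j ∈ Finset.range M, -cf σ M j ≤ ∑ j ∈ Finset.range M, cf σ i j * cf σ M j := by
    apply Finset.sum_le_sum
    intro j hj
    simp at hj
    have hc : cf σ M j ≤ 0 := cf_nonpos σ (by omega)
    have := mul_le_mul_of_nonpos_right (hlow j hj) hc
    linarith [this]
  have hsum := sum_cm σ hσ1 hcm M h1 hMt hones
  rw [Finset.sum_neg_distrib, hsum] at hbound
  have hcfiM : -1 ≤ cf σ i M := cf_ge_neg_one σ (by omega)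
  linarith [hbound, hcfiM]

lemma Rg_one_one (hσ1 : ∀ i, 1 ≤ σ i) (hcm : ChangemakerZ σ) (ht : 0 < t) :
    Rg σ 1 1 = {0} := by
  unfold Rg
  rw [if_pos (by rw [tau_zero σ hσ1 hcm ht])]
  rfl

lemma dot_m_one (hσ1 : ∀ i, 1 ≤ σ i) (hcm : ChangemakerZ σ) (M : ℕ)
    (h2 : 2 ≤ M) (hMt : M < t) (hones : ∀ j < M, tau σ j = 1)
    (htight : tau σ M = Ssum σ M + 1) :
    ∑ k ∈ Finset.range t, cf σ M k * cf σ 1 k = 1 := by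
  have ht1 : tau σ 1 = 1 := hones 1 (by omega)
  have hnt1 : ¬ tau σ 1 = Ssum σ 1 + 1 := by
    have : Ssum σ 1 = tau σ 0 := by simp [Ssum]
    rw [this, tau_zero σ hσ1 hcm (by omega)]
    omega
  have hRg1 : Rg σ 1 (tau σ 1) = {0} := by rw [ht1]; exact Rg_one_one σ hσ1 hcm (by omega)
  have hsub : Finset.range 2 ⊆ Finset.range t := by intro j hj; simp at hj ⊢; omega
  rw [← Finset.sum_subset hsub (fun j hj hj2 => by
    have hij : 1 < j := by simp at hj hj2; omega
    have : cf σ 1 j = 0 := by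
      rw [cf_nontight σ (by omega) hnt1, if_neg (by rw [hRg1]; simp; omega)]
    rw [this, mul_zero])]
  rw [show (2:ℕ) = 1 + 1 from rfl, Finset.sum_range_succ, Finset.sum_range_succ,
    Finset.sum_range_zero]
  rw [cf_self σ 1, cf_tight_zero σ (by omega) htight, cf_tight_mid σ (by omega) (by omega) htight,
    cf_nontight σ (by omega) hnt1, if_pos (by rw [hRg1]; simp)]
  ring

end Dots


section Main

lemma dotI_comm (x y : Fin t → ℤ) : dotI x y = dotI y x :=
  Finset.sum_congr rfl fun k _ => mul_comm _ _

lemma Ssum_ones (M : ℕ) (hones : ∀ j < M, tau σ j = 1) (k : ℕ) (hk : k ≤ M) :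
    Ssum σ k = (k : ℤ) := by
  induction k with
  | zero => simp [Ssum]
  | succ n ih =>
    have : Ssum σ (n+1) = Ssum σ n + tau σ n := Finset.sum_range_succ _ _
    rw [this, ih (by omega), hones n (by omega)]
    push_cast; ring

lemma vv_in (hσ1 : ∀ i, 1 ≤ σ i) (hcm : ChangemakerZ σ)
    (L₁ L₂ : Submodule ℤ (Fin t → ℤ))
    (hL1 : L₁ ≤ LinearMap.ker (dotMap σ)) (hL2 : L₂ ≤ LinearMap.ker (dotMap σ))
    (hsup : L₁ ⊔ L₂ = LinearMap.ker (dotMap σ))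
    (horth : ∀ x ∈ L₁, ∀ y ∈ L₂, dotI x y = 0)
    (i : ℕ) (h1 : 1 ≤ i) (hit : i < t) : Vv σ i ∈ L₁ ∨ Vv σ i ∈ L₂ := by
  have hmem : Vv σ i ∈ L₁ ⊔ L₂ := by rw [hsup]; exact Vv_mem_ker σ hσ1 hcm i h1 hit
  obtain ⟨x, hx, y, hy, hxy⟩ := Submodule.mem_sup.mp hmem
  have hx0 : ∑ k, x k * σ k = 0 := by
    have := hL1 hx; rw [LinearMap.mem_ker, dotMap_apply] at this; exact this
  have hy0 : ∑ k, y k * σ k = 0 := by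
    have := hL2 hy; rw [LinearMap.mem_ker, dotMap_apply] at this; exact this
  have hdxy : ∑ k, x k * y k = 0 := horth x hx y hy
  rcases irr σ hσ1 hcm i h1 hit x y hxy hx0 hy0 hdxy with h | h
  · right
    have : Vv σ i = y := by rw [← hxy, h, zero_add]
    rw [this]; exact hy
  · left
    have : Vv σ i = x := by rw [← hxy, h, add_zero]
    rw [this]; exact hx

lemma main (hσ1 : ∀ i, 1 ≤ σ i) (hcm : ChangemakerZ σ) (M : ℕ) (hM1 : 1 ≤ M) (hMt : M < t)
    (hones : ∀ j < M, tau σ j = 1) (hτM : 2 ≤ tau σ M) (hneM : tau σ M ≠ (M : ℤ))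
    (L₁ L₂ : Submodule ℤ (Fin t → ℤ))
    (hL1 : L₁ ≤ LinearMap.ker (dotMap σ)) (hL2 : L₂ ≤ LinearMap.ker (dotMap σ))
    (hb2 : L₂ ≠ ⊥) (hsup : L₁ ⊔ L₂ = LinearMap.ker (dotMap σ))
    (horth : ∀ x ∈ L₁, ∀ y ∈ L₂, dotI x y = 0)
    (hbase : Vv σ 1 ∈ L₁) : False := by
  have hSM : Ssum σ M = (M : ℤ) := Ssum_ones σ M hones M (le_refl M)
  have edge : ∀ i j, 1 ≤ i → i < t → Vv σ j ∈ L₁ → dotI (Vv σ j) (Vv σ i) ≠ 0 →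
      Vv σ i ∈ L₁ := by
    intro i j h1 hit hj hne'
    rcases vv_in σ hσ1 hcm L₁ L₂ hL1 hL2 hsup horth i h1 hit with h | h
    · exact h
    · exact absurd (horth (Vv σ j) hj (Vv σ i) h) hne'
  have key : ∀ i, 1 ≤ i → i < t → Vv σ i ∈ L₁ := by
    intro i
    induction i using Nat.strong_induction_on with
    | _ i IH =>
    intro h1 hit
    rcases eq_or_lt_of_le h1 with h | h
    · rw [← h]; exact hbase
    · by_cases htight : tau σ i = Ssum σ i + 1
      · -- tight case
        have hiM : M ≤ i := by
          by_contra hlt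
          push_neg at hlt
          have h1' : tau σ i = 1 := hones i hlt
          have hSi : Ssum σ i = (i : ℤ) := Ssum_ones σ M hones i (by omega)
          omega
        rcases eq_or_lt_of_le hiM with hEq | hMi
        · -- i = M : link to v_1
          subst hEq
          have hd := dot_m_one σ hσ1 hcm M (by omega) hMt hones htight
          apply edge M 1 h1 hit hbase
          rw [dotI_comm, dotI_vv σ M 1, hd]
          omega
        · -- M < i : link to v_M
          have hVM : Vv σ M ∈ L₁ := IH M hMi hM1 hMt
          have hlow : ∀ j, j < M → cf σ i j ≤ -1 := by
            intro j hj
            by_cases hj0 : j = 0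
            · subst hj0; rw [cf_tight_zero σ (by omega) htight]; omega
            · rw [cf_tight_mid σ hj0 (by omega) htight]
          have hge := dot_to_vm σ hσ1 hcm M i hM1 hMi hit hones hlow
          apply edge i M h1 hit hVM
          rw [dotI_comm, dotI_vv σ i M]
          omega
      · -- non-tight case
        have hτi : 1 ≤ tau σ i := tau_pos σ hσ1 i
        have hle : tau σ i ≤ Ssum σ i := by
          have := tau_le_Ssum_add_one σ hσ1 hcm i hit; omega
        have hRne : (Rg σ i (tau σ i)).Nonempty :=
          Rg_nonempty σ hσ1 hcm i (le_of_lt hit) _ hτi hle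
        set K := (Rg σ i (tau σ i)).min' hRne with hKdef
        have hKmem : K ∈ Rg σ i (tau σ i) := Finset.min'_mem _ hRne
        have hKmin : ∀ j ∈ Rg σ i (tau σ i), K ≤ j := fun j hj => Finset.min'_le _ j hj
        have hKi : K < i := by have := Rg_subset σ i (tau σ i) hKmem; simpa using this
        rcases Nat.eq_zero_or_pos K with hK0 | hK1
        · -- K = 0 : link to v_M
          have hiM : M < i := by
            rcases Nat.lt_trichotomy i M with h' | h' | h'
            · exfalso
              have hRg : Rg σ i (tau σ i) = Finset.Ico (i - ((1:ℤ)).toNat) i := by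
                rw [hones i h']
                exact Rg_ones σ hσ1 i (fun j hj => hones j (by omega)) 1 (by norm_num)
                  (by exact_mod_cast Nat.one_le_cast.mpr (by omega))
              rw [hK0, hRg] at hKmem
              simp [Finset.mem_Ico] at hKmem
              omega
            · exfalso
              subst h'
              have hRg : Rg σ i (tau σ i) = Finset.Ico (i - (tau σ i).toNat) i :=
                Rg_ones σ hσ1 i hones (tau σ i) (by omega) (by rw [← hSM]; exact hle)
              rw [hK0, hRg] at hKmem
              simp [Finset.mem_Ico] at hKmem
              rw [hSM] at hle
              omega
            · exact h'
          have hsubM : ∀ j, j < M → j ∈ Rg σ i (tau σ i) := by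
            obtain ⟨r, hr, hinter⟩ := Rg_inter σ hσ1 hcm M i hones (le_of_lt hiM)
              (le_of_lt hit) (tau σ i) (by omega) hle
            have h0m : (0 : ℕ) ∈ Rg σ i (tau σ i) ∩ Finset.range M := by
              rw [Finset.mem_inter]
              exact ⟨hK0 ▸ hKmem, by simp; omega⟩
            rw [hinter] at h0m
            have hrM : M - r = 0 := by
              simp [Finset.mem_Ico] at h0m; omega
            intro j hj
            have hjm : j ∈ Finset.Ico (M - r) M := by simp [Finset.mem_Ico]; omega
            rw [← hinter] at hjm
            exact (Finset.mem_inter.mp hjm).1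
          have hlow : ∀ j, j < M → cf σ i j ≤ -1 := by
            intro j hj
            rw [cf_nontight σ (by omega) htight, if_pos (hsubM j hj)]
          have hVM : Vv σ M ∈ L₁ := IH M hiM hM1 hMt
          have hge := dot_to_vm σ hσ1 hcm M i hM1 hiM hit hones hlow
          apply edge i M h1 hit hVM
          rw [dotI_comm, dotI_vv σ i M]
          omega
        · -- K ≥ 1 : link to v_K
          have hdot := dot_min σ i K (by omega) hit htight hKmem hKmin
          have hVK : Vv σ K ∈ L₁ := IH K hKi hK1 (by omega)
          apply edge i K (by omega) hit hVK
          rw [dotI_comm, dotI_vv σ i K, hdot]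
          omega
  have hsubset : VSet σ ⊆ (L₁ : Set (Fin t → ℤ)) := by
    rintro w ⟨i, h1, hit, rfl⟩
    exact key i h1 hit
  have hspan : Submodule.span ℤ (VSet σ) ≤ L₁ := Submodule.span_le.mpr hsubset
  obtain ⟨z, hz, hz0⟩ := Submodule.ne_bot_iff L₂ |>.mp hb2
  have hzL : z ∈ L₁ := hspan (ker_le_span σ hσ1 hcm z (hL2 hz))
  have hzz : dotI z z = 0 := horth z hzL z hz
  apply hz0
  funext k
  have hall := (Finset.sum_eq_zero_iff_of_nonneg
    (fun k (_ : k ∈ Finset.univ) => mul_self_nonneg (z k))).mp hzz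
  exact mul_self_eq_zero.mp (hall k (Finset.mem_univ k))

end Main

end CM15

/-- If the changemaker lattice `L = ⟨w_0⟩^⊥ ⊆ ℤ^t`, `w_0 = σ_1 f_1 + … + σ_t f_t`, is
decomposable, then `σ_m = m − 1`, where `m` is the minimal (1-based) index with
`σ_m > 1`. (Here indices are 0-based, so the conclusion reads `σ m = m`.) -/
theorem stmt15 (t : ℕ) (ht : 1 ≤ t) (σ : Fin t → ℤ)
    (hcm : ChangemakerZ σ) (hσ1 : ∀ i, 1 ≤ σ i)
    (hσt : 1 < σ ⟨t - 1, by omega⟩)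
    (m : Fin t) (hm : 1 < σ m) (hmin : ∀ j, j < m → ¬ 1 < σ j)
    (hdec : ∃ L₁ L₂ : Submodule ℤ (Fin t → ℤ),
      L₁ ≤ LinearMap.ker (dotMap σ) ∧ L₂ ≤ LinearMap.ker (dotMap σ) ∧
      L₁ ≠ ⊥ ∧ L₂ ≠ ⊥ ∧ L₁ ⊓ L₂ = ⊥ ∧ L₁ ⊔ L₂ = LinearMap.ker (dotMap σ) ∧
      ∀ x ∈ L₁, ∀ y ∈ L₂, dotI x y = 0) :
    σ m = ((m : ℕ) : ℤ) := by
  classical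
  by_contra hne0
  obtain ⟨L₁, L₂, hL1, hL2, hb1, hb2, hinf, hsup, horth⟩ := hdec
  set M := (m : ℕ) with hMdef
  have hMt : M < t := m.isLt
  have hM1 : 1 ≤ M := by
    rcases Nat.eq_zero_or_pos M with h | h
    · exfalso
      have := (hcm.1 m (by omega)).2
      omega
    · exact h
  have hones : ∀ j < M, CM15.tau σ j = 1 := by
    intro j hj
    have hjt : j < t := by omega
    have hlt : (⟨j, hjt⟩ : Fin t) < m := by
      rw [Fin.lt_def]; exact hj
    have h1 := hmin _ hlt
    have h2 := hσ1 (⟨j, hjt⟩ : Fin t)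
    simp only [CM15.tau, hjt, dif_pos]
    omega
  have hτM : CM15.tau σ M = σ m := CM15.tau_fin σ m
  have hτM2 : 2 ≤ CM15.tau σ M := by rw [hτM]; omega
  have hneM : CM15.tau σ M ≠ (M : ℤ) := by rw [hτM]; exact hne0
  have horth' : ∀ x ∈ L₂, ∀ y ∈ L₁, dotI x y = 0 := by
    intro x hx y hy
    rw [CM15.dotI_comm]
    exact horth y hy x hx
  rcases CM15.vv_in σ hσ1 hcm L₁ L₂ hL1 hL2 hsup horth 1 (le_refl 1) (by omega) with h | h
  · exact absurd (CM15.main σ hσ1 hcm M hM1 hMt hones hτM2 hneM L₁ L₂ hL1 hL2 hb2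
      hsup horth h) (fun f => f)
  · exact absurd (CM15.main σ hσ1 hcm M hM1 hMt hones hτM2 hneM L₂ L₁ hL2 hL1 hb1
      (by rw [sup_comm]; exact hsup) horth' h) (fun f => f)
end
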